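/- Let (M',0) be a germ of real analytic hypersurface of ℂ^n, n ≥ 2, encoded in normal coordinates by Θ̄', with conjugate series Θ'(ζ',w',z') = Σ_{β∈ℕ^{n-1}, β≠0} ζ'^β Θ'_β(w',z') and convention Θ'_0(w',z') := z'. Then there exists no nonzero holomorphic vector field L' = Σ_{k=1}^n a'_k(t') ∂/∂t'_k with a'_k ∈ ℂ{t'} tangent to (M',0) (holomorphic nondegeneracy of M' at 0) if and only if there exist multiindices β^1,…,β^{n-1} ∈ ℕ^{n-1}∖{0} such that, with β^n := 0 and t' = (w',z'), det(∂Θ'_{β^i}/∂t'_j(w',z'))_{1≤i,j≤n} ≢ 0 in ℂ{w',z'}. -/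

import Mathlib

open scoped Classical

noncomputable section

/-- Total degree of a multi-exponent. -/
def degf {σ : Type*} (d : σ →₀ ℕ) : ℕ := d.sum fun _ k => k

/-- A formal power series has a positive radius of convergence. -/
def IsConv {σ : Type*} (f : MvPowerSeries σ ℂ) : Prop :=
  ∃ C r : ℝ, 0 < r ∧ ∀ d : σ →₀ ℕ, ‖MvPowerSeries.coeff (R := ℂ) d f‖ * r ^ degf d ≤ C

/-- Formal partial derivative with respect to the variable `i`. -/
def pder {σ : Type*} (i : σ) (f : MvPowerSeries σ ℂ) : MvPowerSeries σ ℂ :=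
  fun d => ((d i + 1 : ℕ) : ℂ) * MvPowerSeries.coeff (R := ℂ) (d + Finsupp.single i 1) f

/-- Substitution (composition) of formal power series: `msubst a f = f ∘ a`.
This formula is the correct composition whenever every `a s` has zero constant term. -/
def msubst {σ τ : Type*} [Fintype σ] [DecidableEq σ] [DecidableEq τ]
    (a : σ → MvPowerSeries τ ℂ) (f : MvPowerSeries σ ℂ) : MvPowerSeries τ ℂ :=
  fun e => ∑ d ∈ Finset.Iic (∑ s : σ, Finsupp.single s (degf e)),
    MvPowerSeries.coeff (R := ℂ) d f * MvPowerSeries.coeff (R := ℂ) e (d.prod fun s k => (a s) ^ k)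

/-- The series with complex-conjugated coefficients. -/
def conjS {σ : Type*} (f : MvPowerSeries σ ℂ) : MvPowerSeries σ ℂ :=
  MvPowerSeries.map (σ := σ) (starRingEnd ℂ) f

/-- Absolute summability of the monomials of `f` at the point `x`. -/
def SummableAt {σ : Type*} (f : MvPowerSeries σ ℂ) (x : σ → ℂ) : Prop :=
  Summable fun d : σ →₀ ℕ => ‖MvPowerSeries.coeff (R := ℂ) d f‖ * d.prod fun i k => ‖x i‖ ^ k

/-- The value at `x` of (the sum of) the series `f`. -/
def evalAt {σ : Type*} (f : MvPowerSeries σ ℂ) (x : σ → ℂ) : ℂ :=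
  ∑' d : σ →₀ ℕ, MvPowerSeries.coeff (R := ℂ) d f * d.prod fun i k => x i ^ k

/- ### CR geometry in normal coordinates.
`m = n - 1 ≥ 1`.  The variables of `Θ̄` are indexed by `Fin m ⊕ (Fin m ⊕ Unit)`:
the first block is the first (vector) argument, the second block the last two arguments. -/

variable (m : ℕ)

/-- `Θ̄(0,ζ,ξ) ≡ 0` and `Θ̄(w,0,ξ) ≡ 0` (normality), coefficientwise. -/
def NormVanish (Θ : MvPowerSeries (Fin m ⊕ (Fin m ⊕ Unit)) ℂ) : Prop :=
  (∀ d : (Fin m ⊕ (Fin m ⊕ Unit)) →₀ ℕ,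
      (∀ j : Fin m, d (Sum.inl j) = 0) → MvPowerSeries.coeff (R := ℂ) d Θ = 0) ∧
  (∀ d : (Fin m ⊕ (Fin m ⊕ Unit)) →₀ ℕ,
      (∀ j : Fin m, d (Sum.inr (Sum.inl j)) = 0) → MvPowerSeries.coeff (R := ℂ) d Θ = 0)

/-- The complexified defining series `r(t,τ) = z - ξ - iΘ̄(w,ζ,ξ)`, in the
variables `(w,z,ζ,ξ)` indexed by `(Fin m ⊕ Unit) ⊕ (Fin m ⊕ Unit)`. -/
def rSeries (Θ : MvPowerSeries (Fin m ⊕ (Fin m ⊕ Unit)) ℂ) :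
    MvPowerSeries ((Fin m ⊕ Unit) ⊕ (Fin m ⊕ Unit)) ℂ :=
  MvPowerSeries.X (Sum.inl (Sum.inr ())) - MvPowerSeries.X (Sum.inr (Sum.inr ())) -
    (MvPowerSeries.C (σ := _) (R := ℂ)) Complex.I *
      msubst (Sum.elim (fun j => MvPowerSeries.X (Sum.inl (Sum.inl j)))
        (Sum.elim (fun j => MvPowerSeries.X (Sum.inr (Sum.inl j)))
          (fun _ => MvPowerSeries.X (Sum.inr (Sum.inr ()))))) Θ

/-- The conjugate complexified defining series `r̄(τ,t) = ξ - z + iΘ(ζ,w,z)`, in the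
variables `(w,z,ζ,ξ)`. -/
def rbarSeries (Θ : MvPowerSeries (Fin m ⊕ (Fin m ⊕ Unit)) ℂ) :
    MvPowerSeries ((Fin m ⊕ Unit) ⊕ (Fin m ⊕ Unit)) ℂ :=
  MvPowerSeries.X (Sum.inr (Sum.inr ())) - MvPowerSeries.X (Sum.inl (Sum.inr ())) +
    (MvPowerSeries.C (σ := _) (R := ℂ)) Complex.I *
      msubst (Sum.elim (fun j => MvPowerSeries.X (Sum.inr (Sum.inl j)))
        (Sum.elim (fun j => MvPowerSeries.X (Sum.inl (Sum.inl j)))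
          (fun _ => MvPowerSeries.X (Sum.inl (Sum.inr ()))))) (conjS Θ)

/-- Reality of the encoded hypersurface:
`ξ - z + iΘ(ζ,w,z) = α(w,z,ζ,ξ) ⬝ (z - ξ - iΘ̄(w,ζ,ξ))` for a unit `α`. -/
def RealityCond (Θ : MvPowerSeries (Fin m ⊕ (Fin m ⊕ Unit)) ℂ) : Prop :=
  ∃ α : MvPowerSeries ((Fin m ⊕ Unit) ⊕ (Fin m ⊕ Unit)) ℂ,
    IsConv α ∧ MvPowerSeries.constantCoeff (σ := _) (R := ℂ) α ≠ 0 ∧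
      rbarSeries m Θ = α * rSeries m Θ

/-- `Θ̄` encodes a germ of real analytic hypersurface in normal coordinates. -/
def NormalEnc (Θ : MvPowerSeries (Fin m ⊕ (Fin m ⊕ Unit)) ℂ) : Prop :=
  IsConv Θ ∧ NormVanish m Θ ∧ RealityCond m Θ

/-- Minimality at `0` : `Θ̄(w,ζ,0) ≢ 0`. -/
def MinimalAt0 (Θ : MvPowerSeries (Fin m ⊕ (Fin m ⊕ Unit)) ℂ) : Prop :=
  ∃ d : (Fin m ⊕ (Fin m ⊕ Unit)) →₀ ℕ,
    d (Sum.inr (Sum.inr ())) = 0 ∧ MvPowerSeries.coeff (R := ℂ) d Θ ≠ 0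

/-- The coefficient series `Θ'_β(w',z')` of `ζ'^β` in `Θ'(ζ',w',z')` (the series with
conjugated coefficients), with the convention `Θ'_0(w',z') := z'`. -/
def thetaCoef (Θ : MvPowerSeries (Fin m ⊕ (Fin m ⊕ Unit)) ℂ) (β : Fin m →₀ ℕ) :
    MvPowerSeries (Fin m ⊕ Unit) ℂ :=
  if β = 0 then MvPowerSeries.X (Sum.inr ())
  else fun d => MvPowerSeries.coeff (R := ℂ) (Finsupp.sumElim β d) (conjS Θ)

/-- The substitution `ξ := z - iΘ(ζ,w,z)`, a series in the variables `(w,z,ζ)`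
indexed by `(Fin m ⊕ Unit) ⊕ Fin m`. -/
def xiSub (Θ : MvPowerSeries (Fin m ⊕ (Fin m ⊕ Unit)) ℂ) :
    MvPowerSeries ((Fin m ⊕ Unit) ⊕ Fin m) ℂ :=
  MvPowerSeries.X (Sum.inl (Sum.inr ())) -
    (MvPowerSeries.C (σ := _) (R := ℂ)) Complex.I *
      msubst (Sum.elim (fun j => MvPowerSeries.X (Sum.inr j))
        (Sum.elim (fun j => MvPowerSeries.X (Sum.inl (Sum.inl j)))
          (fun _ => MvPowerSeries.X (Sum.inl (Sum.inr ()))))) (conjS Θ)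

/-- The assignment sending `(ζ,ξ)` to `(ζ, z - iΘ(ζ,w,z))`, with values in the
variables `(w,z,ζ)`. -/
def tauSub (Θ : MvPowerSeries (Fin m ⊕ (Fin m ⊕ Unit)) ℂ) :
    (Fin m ⊕ Unit) → MvPowerSeries ((Fin m ⊕ Unit) ⊕ Fin m) ℂ :=
  Sum.elim (fun j => MvPowerSeries.X (Sum.inr j)) (fun _ => xiSub m Θ)

/-- `h = (g,f)` is a formal CR map `(M,0) → (M',0)` :  `h(0) = 0` and
`f(w,z) - f̄(ζ,ξ) - iΘ̄'(g(w,z), ḡ(ζ,ξ), f̄(ζ,ξ)) ≡ 0` in `ℂ⟦w,z,ζ⟧` after the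
substitution `ξ := z - iΘ(ζ,w,z)`.  The components of `h` are indexed by
`Fin m ⊕ Unit`: `g = h ∘ Sum.inl` and `f = h (Sum.inr ())`. -/
def IsCRMap (Θ Θ' : MvPowerSeries (Fin m ⊕ (Fin m ⊕ Unit)) ℂ)
    (h : (Fin m ⊕ Unit) → MvPowerSeries (Fin m ⊕ Unit) ℂ) : Prop :=
  (∀ k, MvPowerSeries.constantCoeff (σ := _) (R := ℂ) (h k) = 0) ∧
  msubst (fun k => MvPowerSeries.X (Sum.inl k)) (h (Sum.inr ())) -
      msubst (tauSub m Θ) (conjS (h (Sum.inr ()))) -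
      (MvPowerSeries.C (σ := _) (R := ℂ)) Complex.I *
        msubst (Sum.elim
            (fun j => msubst (fun k => MvPowerSeries.X (Sum.inl k)) (h (Sum.inl j)))
            (Sum.elim (fun j => msubst (tauSub m Θ) (conjS (h (Sum.inl j))))
              (fun _ => msubst (tauSub m Θ) (conjS (h (Sum.inr ())))))) Θ'
    = 0

/-- `h` is invertible : nonzero Jacobian determinant at `0`. -/
def InvertibleMap (h : (Fin m ⊕ Unit) → MvPowerSeries (Fin m ⊕ Unit) ℂ) : Prop :=
  Matrix.det (Matrix.of fun j k : Fin m ⊕ Unit =>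
    MvPowerSeries.coeff (R := ℂ) (Finsupp.single k 1) (h j)) ≠ 0

/-- Holomorphic nondegeneracy at `0` witnessed by the multiindices `B i ≠ 0`
(and `β^n := 0`) : `det(∂Θ'_{β^i}/∂t'_j) ≢ 0`. -/
def HoloNondegWith (Θ' : MvPowerSeries (Fin m ⊕ (Fin m ⊕ Unit)) ℂ)
    (B : Fin m → (Fin m →₀ ℕ)) : Prop :=
  (∀ i, B i ≠ 0) ∧
  Matrix.det (Matrix.of fun i j : Fin m ⊕ Unit =>
    pder j (thetaCoef m Θ' (Sum.elim B (fun _ => (0 : Fin m →₀ ℕ)) i))) ≠ 0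

/-- Holomorphic nondegeneracy at `0`. -/
def HoloNondeg (Θ' : MvPowerSeries (Fin m ⊕ (Fin m ⊕ Unit)) ℂ) : Prop :=
  ∃ B : Fin m → (Fin m →₀ ℕ), HoloNondegWith m Θ' B

/-- The reflection function `ℛ'_h(w,z,λ̄',μ̄') = μ̄' - f(w,z) + i Σ_{β≠0} λ̄'^β Θ'_β(g(w,z),f(w,z))`,
a series in the variables `(w,z)` (first block) and `(λ̄',μ̄')` (second block).
The series `i Σ_{β≠0} λ̄'^β Θ'_β(g(w,z),f(w,z))`, defined coefficientwise. -/
def reflTail (Θ' : MvPowerSeries (Fin m ⊕ (Fin m ⊕ Unit)) ℂ)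
    (h : (Fin m ⊕ Unit) → MvPowerSeries (Fin m ⊕ Unit) ℂ) :
    MvPowerSeries ((Fin m ⊕ Unit) ⊕ (Fin m ⊕ Unit)) ℂ :=
  fun D =>
    let p := Finsupp.sumFinsuppEquivProdFinsupp D
    let q := Finsupp.sumFinsuppEquivProdFinsupp p.2
    if q.2 = 0 ∧ q.1 ≠ 0 then
      Complex.I * MvPowerSeries.coeff (R := ℂ) p.1 (msubst h (thetaCoef m Θ' q.1))
    else 0

def reflFn (Θ' : MvPowerSeries (Fin m ⊕ (Fin m ⊕ Unit)) ℂ)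
    (h : (Fin m ⊕ Unit) → MvPowerSeries (Fin m ⊕ Unit) ℂ) :
    MvPowerSeries ((Fin m ⊕ Unit) ⊕ (Fin m ⊕ Unit)) ℂ :=
  MvPowerSeries.X (Sum.inr (Sum.inr ())) -
    msubst (fun k => MvPowerSeries.X (Sum.inl k)) (h (Sum.inr ())) +
    reflTail m Θ' h


/-- Restriction `ξ := 0` : the series `Θ̄(w,ζ,0)` in the variables `(w,ζ)`
indexed by `Fin m ⊕ Fin m`. -/
def restXi0 (Θ : MvPowerSeries (Fin m ⊕ (Fin m ⊕ Unit)) ℂ) :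
    MvPowerSeries (Fin m ⊕ Fin m) ℂ :=
  msubst (Sum.elim (fun j => MvPowerSeries.X (Sum.inl j))
    (Sum.elim (fun j => MvPowerSeries.X (Sum.inr j)) (fun _ => 0))) Θ

/-- Restriction `z := 0` of a series in the variables `(w,z)`. -/
def restZ0 (f : MvPowerSeries (Fin m ⊕ Unit) ℂ) : MvPowerSeries (Fin m) ℂ :=
  msubst (Sum.elim MvPowerSeries.X (fun _ => 0)) f

/-- `Θ'_β(g(w,z), f(w,z))`, the composition of the coefficient series `Θ'_β`
with the formal map `h = (g,f)`. -/
def thetaComp (Θ' : MvPowerSeries (Fin m ⊕ (Fin m ⊕ Unit)) ℂ)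
    (h : (Fin m ⊕ Unit) → MvPowerSeries (Fin m ⊕ Unit) ℂ) (β : Fin m →₀ ℕ) :
    MvPowerSeries (Fin m ⊕ Unit) ℂ :=
  msubst h (thetaCoef m Θ' β)

/-- The reflection function restricted to the first Segre chain `z = 0`, a series in
the variables `(w, λ̄', μ̄')` indexed by `Fin m ⊕ (Fin m ⊕ Unit)`. -/
def reflAt0 (Θ' : MvPowerSeries (Fin m ⊕ (Fin m ⊕ Unit)) ℂ)
    (h : (Fin m ⊕ Unit) → MvPowerSeries (Fin m ⊕ Unit) ℂ) :
    MvPowerSeries (Fin m ⊕ (Fin m ⊕ Unit)) ℂ :=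
  msubst (Sum.elim (Sum.elim (fun j => MvPowerSeries.X (Sum.inl j)) (fun _ => 0))
    (fun k => MvPowerSeries.X (Sum.inr k))) (reflFn m Θ' h)

/-- Segre nondegeneracy at `0` witnessed by the multiindices `B i ≠ 0` :
`det(∂Θ'_{β^i}/∂w'_j (w',0))_{1≤i,j≤n-1} ≢ 0`. -/
def SegreNondegWith (Θ' : MvPowerSeries (Fin m ⊕ (Fin m ⊕ Unit)) ℂ)
    (B : Fin m → (Fin m →₀ ℕ)) : Prop :=
  (∀ i, B i ≠ 0) ∧
  Matrix.det (Matrix.of fun i j : Fin m =>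
    restZ0 m (pder (Sum.inl j) (thetaCoef m Θ' (B i)))) ≠ 0

/-- The parametrization of the second Segre chain : the assignment
`(w,z) ↦ (w, iΘ̄(w,ζ,0))`, with values in the variables `(w,ζ)`. -/
def segre2 (Θ : MvPowerSeries (Fin m ⊕ (Fin m ⊕ Unit)) ℂ) :
    (Fin m ⊕ Unit) → MvPowerSeries (Fin m ⊕ Fin m) ℂ :=
  Sum.elim (fun j => MvPowerSeries.X (Sum.inl j))
    (fun _ => (MvPowerSeries.C (σ := _) (R := ℂ)) Complex.I * restXi0 m Θ)

/-- A nontrivial holomorphic vector field `L' = Σ a_k ∂/∂t'_k` with convergent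
coefficients which is tangent to the hypersurface encoded by `Θ'`, i.e.
`Σ_k a_k(w',z') ∂_{t'_k}[ξ' - z' + iΘ'(ζ',w',z')]` lies in the ideal generated by
`ξ' - z' + iΘ'(ζ',w',z')` (with a convergent cofactor). -/
def IsTangentField (Θ' : MvPowerSeries (Fin m ⊕ (Fin m ⊕ Unit)) ℂ)
    (a : (Fin m ⊕ Unit) → MvPowerSeries (Fin m ⊕ Unit) ℂ) : Prop :=
  (∀ k, IsConv (a k)) ∧
  ∃ q : MvPowerSeries ((Fin m ⊕ Unit) ⊕ (Fin m ⊕ Unit)) ℂ, IsConv q ∧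
    (∑ k : Fin m ⊕ Unit,
        msubst (fun j => MvPowerSeries.X (Sum.inl j)) (a k) *
          pder (Sum.inl k) (rbarSeries m Θ'))
      = q * rbarSeries m Θ'


-- ## basics

lemma coeff_eq {σ : Type*} (d : σ →₀ ℕ) (f : MvPowerSeries σ ℂ) :
    MvPowerSeries.coeff (R := ℂ) d f = f d := rfl

lemma degf_add {σ : Type*} (a b : σ →₀ ℕ) : degf (a + b) = degf a + degf b :=
  Finsupp.sum_add_index' (fun _ => rfl) (fun _ _ _ => rfl)

@[simp] lemma degf_zero {σ : Type*} : degf (0 : σ →₀ ℕ) = 0 := rfl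

@[simp] lemma degf_single {σ : Type*} (i : σ) (n : ℕ) : degf (Finsupp.single i n) = n :=
  Finsupp.sum_single_index rfl

lemma degf_eq_zero_iff {σ : Type*} (d : σ →₀ ℕ) : degf d = 0 ↔ d = 0 := by
  constructor
  · intro h
    ext i
    by_cases hi : i ∈ d.support
    · exact absurd (Finset.sum_eq_zero_iff.mp h i hi) (Finsupp.mem_support_iff.mp hi)
    · simpa using Finsupp.notMem_support_iff.mp hi
  · rintro rfl; rfl

lemma le_degf {σ : Type*} (d : σ →₀ ℕ) (i : σ) : d i ≤ degf d := by
  by_cases hi : i ∈ d.support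
  · exact Finset.single_le_sum (f := fun j => d j) (fun _ _ => Nat.zero_le _) hi
  · simp [Finsupp.notMem_support_iff.mp hi]

lemma degf_mapDomain {σ τ : Type*} (u : σ → τ) (d : σ →₀ ℕ) :
    degf (Finsupp.mapDomain u d) = degf d :=
  Finsupp.sum_mapDomain_index (fun _ => rfl) (fun _ _ _ => rfl)

lemma coeff_pder {σ : Type*} (i : σ) (f : MvPowerSeries σ ℂ) (d : σ →₀ ℕ) :
    MvPowerSeries.coeff (R := ℂ) d (pder i f)
      = ((d i + 1 : ℕ) : ℂ) * MvPowerSeries.coeff (R := ℂ) (d + Finsupp.single i 1) f := rfl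

lemma pder_add {σ : Type*} (i : σ) (f g : MvPowerSeries σ ℂ) :
    pder i (f + g) = pder i f + pder i g := by
  apply MvPowerSeries.ext; intro d
  simp only [coeff_pder, map_add]; ring

lemma pder_X {σ : Type*} [DecidableEq σ] (i j : σ) :
    pder i (MvPowerSeries.X j : MvPowerSeries σ ℂ) = if i = j then 1 else 0 := by
  apply MvPowerSeries.ext; intro d
  rw [coeff_pder, MvPowerSeries.coeff_X]
  by_cases h : i = j
  · subst h
    simp only [add_eq_right]
    by_cases hd : d = 0
    · subst hd; simp
    · simp [MvPowerSeries.coeff_one, hd]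
  · rw [if_neg h, if_neg, MvPowerSeries.coeff_zero, mul_zero]
    intro hc
    have := Finsupp.ext_iff.mp hc i
    simp [Finsupp.single_apply, h, Ne.symm h] at this

-- ## rename machinery

def pullb {σ τ : Type*} [Fintype σ] (u : σ → τ) (e : τ →₀ ℕ) : σ →₀ ℕ :=
  Finsupp.equivFunOnFinite.symm (fun s => e (u s))

@[simp] lemma pullb_apply {σ τ : Type*} [Fintype σ] (u : σ → τ) (e : τ →₀ ℕ) (s : σ) :
    pullb u e s = e (u s) := rfl

def Supp {σ τ : Type*} (u : σ → τ) (e : τ →₀ ℕ) : Prop :=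
  ∀ t, e t ≠ 0 → t ∈ Set.range u

lemma pullb_add {σ τ : Type*} [Fintype σ] (u : σ → τ) (e e' : τ →₀ ℕ) :
    pullb u (e + e') = pullb u e + pullb u e' := by
  ext s; simp

lemma mapDomain_pullb {σ τ : Type*} [Fintype σ] {u : σ → τ} (hu : Function.Injective u)
    {e : τ →₀ ℕ} (he : Supp u e) : Finsupp.mapDomain u (pullb u e) = e := by
  ext t
  by_cases ht : t ∈ Set.range u
  · obtain ⟨s, rfl⟩ := ht
    rw [Finsupp.mapDomain_apply hu]
    rfl
  · rw [Finsupp.mapDomain_notin_range _ _ ht]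
    by_contra hc
    exact ht (he t fun h => hc h.symm)

lemma pullb_mapDomain {σ τ : Type*} [Fintype σ] {u : σ → τ} (hu : Function.Injective u)
    (d : σ →₀ ℕ) : pullb u (Finsupp.mapDomain u d) = d := by
  ext s; simp [Finsupp.mapDomain_apply hu]

lemma Supp_mapDomain {σ τ : Type*} (u : σ → τ) (d : σ →₀ ℕ) :
    Supp u (Finsupp.mapDomain u d) := by
  intro t ht
  by_contra hc
  exact ht (Finsupp.mapDomain_notin_range _ _ hc)

lemma Supp_add {σ τ : Type*} {u : σ → τ} {e e' : τ →₀ ℕ} (h : Supp u e) (h' : Supp u e') :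
    Supp u (e + e') := by
  intro t ht
  rcases Nat.eq_zero_or_pos (e t) with h0 | h0
  · exact h' t (by simpa [h0] using ht)
  · exact h t (by omega)

lemma Supp_of_le {σ τ : Type*} {u : σ → τ} {e e' : τ →₀ ℕ} (h : Supp u e) (hle : e' ≤ e) :
    Supp u e' := by
  intro t ht
  exact h t (by have := hle t; omega)

/-- Renaming of variables along `u` (gives junk if `u` is not injective). -/
def Rn {σ τ : Type*} [Fintype σ] (u : σ → τ) (f : MvPowerSeries σ ℂ) : MvPowerSeries τ ℂ :=
  fun e => if Supp u e then MvPowerSeries.coeff (R := ℂ) (pullb u e) f else 0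

lemma coeff_Rn_of_supp {σ τ : Type*} [Fintype σ] (u : σ → τ) (f : MvPowerSeries σ ℂ)
    {e : τ →₀ ℕ} (he : Supp u e) :
    MvPowerSeries.coeff (R := ℂ) e (Rn u f) = MvPowerSeries.coeff (R := ℂ) (pullb u e) f := by
  rw [coeff_eq, Rn, if_pos he]

lemma coeff_Rn_of_not_supp {σ τ : Type*} [Fintype σ] (u : σ → τ) (f : MvPowerSeries σ ℂ)
    {e : τ →₀ ℕ} (he : ¬ Supp u e) :
    MvPowerSeries.coeff (R := ℂ) e (Rn u f) = 0 := by
  rw [coeff_eq, Rn, if_neg he]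

lemma coeff_Rn_mapDomain {σ τ : Type*} [Fintype σ] {u : σ → τ} (hu : Function.Injective u)
    (f : MvPowerSeries σ ℂ) (d : σ →₀ ℕ) :
    MvPowerSeries.coeff (R := ℂ) (Finsupp.mapDomain u d) (Rn u f) = MvPowerSeries.coeff (R := ℂ) d f := by
  rw [coeff_Rn_of_supp u f (Supp_mapDomain u d), pullb_mapDomain hu]

lemma msubst_X_eq_Rn {σ τ : Type*} [Fintype σ] [DecidableEq σ] [DecidableEq τ]
    {u : σ → τ} (hu : Function.Injective u) (f : MvPowerSeries σ ℂ) :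
    msubst (fun s => MvPowerSeries.X (u s)) f = Rn u f := by
  have hprod : ∀ d : σ →₀ ℕ,
      (d.prod fun s k => (MvPowerSeries.X (u s) : MvPowerSeries τ ℂ) ^ k)
        = MvPowerSeries.monomial (R := ℂ) (Finsupp.mapDomain u d) 1 := by
    intro d
    induction d using Finsupp.induction with
    | zero => simp
    | single_add a b f haf hb ih =>
      rw [Finsupp.prod_add_index' (fun s => pow_zero _) (fun s k l => pow_add _ _ _), ih]
      have hs : ((Finsupp.single a b).prod fun s k =>
          (MvPowerSeries.X (u s) : MvPowerSeries τ ℂ) ^ k)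
          = (MvPowerSeries.X (u a) : MvPowerSeries τ ℂ) ^ b :=
        Finsupp.prod_single_index (pow_zero _)
      rw [hs, MvPowerSeries.X_pow_eq,
        MvPowerSeries.monomial_mul_monomial, one_mul, Finsupp.mapDomain_add,
        Finsupp.mapDomain_single]
  apply MvPowerSeries.ext; intro e
  rw [coeff_eq, msubst]
  simp only [hprod, MvPowerSeries.coeff_monomial]
  by_cases he : Supp u e
  · rw [coeff_Rn_of_supp u f he]
    rw [Finset.sum_eq_single (pullb u e)]
    · rw [if_pos (mapDomain_pullb hu he).symm, mul_one]
    · intro d _ hne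
      rw [if_neg, mul_zero]
      intro hc
      exact hne (by rw [hc, pullb_mapDomain hu])
    · intro hni
      exfalso
      apply hni
      rw [Finset.mem_Iic]
      intro s
      calc pullb u e s = e (u s) := rfl
        _ ≤ degf e := le_degf e (u s)
        _ = (∑ s' : σ, Finsupp.single s' (degf e)) s := by
            rw [Finset.sum_apply']
            rw [Finset.sum_eq_single s]
            · simp
            · intro b _ hb; simp [Finsupp.single_apply, hb]
            · intro h; exact absurd (Finset.mem_univ s) h
  · rw [coeff_Rn_of_not_supp u f he]
    apply Finset.sum_eq_zero
    intro d _
    rw [if_neg, mul_zero]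
    intro hc
    exact he (hc ▸ Supp_mapDomain u d)


lemma add_left_le {σ : Type*} {A B e : σ →₀ ℕ} (h : A + B = e) : A ≤ e := by
  intro t
  have := Finsupp.ext_iff.mp h t
  simp only [Finsupp.add_apply] at this
  omega

lemma Rn_zero {σ τ : Type*} [Fintype σ] (u : σ → τ) : Rn u (0 : MvPowerSeries σ ℂ) = 0 := by
  apply MvPowerSeries.ext; intro e
  by_cases he : Supp u e
  · rw [coeff_Rn_of_supp _ _ he]; simp
  · rw [coeff_Rn_of_not_supp _ _ he]; simp

lemma Rn_add {σ τ : Type*} [Fintype σ] (u : σ → τ) (f g : MvPowerSeries σ ℂ) :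
    Rn u (f + g) = Rn u f + Rn u g := by
  apply MvPowerSeries.ext; intro e
  rw [map_add]
  by_cases he : Supp u e
  · rw [coeff_Rn_of_supp _ _ he, coeff_Rn_of_supp _ _ he, coeff_Rn_of_supp _ _ he, map_add]
  · rw [coeff_Rn_of_not_supp _ _ he, coeff_Rn_of_not_supp _ _ he, coeff_Rn_of_not_supp _ _ he,
      add_zero]

lemma Rn_neg {σ τ : Type*} [Fintype σ] (u : σ → τ) (f : MvPowerSeries σ ℂ) :
    Rn u (-f) = - Rn u f := by
  apply MvPowerSeries.ext; intro e
  rw [map_neg]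
  by_cases he : Supp u e
  · rw [coeff_Rn_of_supp _ _ he, coeff_Rn_of_supp _ _ he, map_neg]
  · rw [coeff_Rn_of_not_supp _ _ he, coeff_Rn_of_not_supp _ _ he, neg_zero]

lemma Rn_sub {σ τ : Type*} [Fintype σ] (u : σ → τ) (f g : MvPowerSeries σ ℂ) :
    Rn u (f - g) = Rn u f - Rn u g := by
  rw [sub_eq_add_neg, sub_eq_add_neg, Rn_add, Rn_neg]

lemma Rn_sum {σ τ ι : Type*} [Fintype σ] (u : σ → τ) (s : Finset ι)
    (F : ι → MvPowerSeries σ ℂ) : Rn u (∑ i ∈ s, F i) = ∑ i ∈ s, Rn u (F i) := by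
  classical
  induction s using Finset.induction with
  | empty => simpa using Rn_zero u
  | insert _ _ h ih => rw [Finset.sum_insert h, Finset.sum_insert h, Rn_add, ih]

lemma Rn_C {σ τ : Type*} [Fintype σ] (u : σ → τ) (c : ℂ) :
    Rn u (MvPowerSeries.C (σ := σ) (R := ℂ) c) = MvPowerSeries.C (σ := τ) (R := ℂ) c := by
  apply MvPowerSeries.ext; intro e
  rw [MvPowerSeries.coeff_C]
  by_cases he : Supp u e
  · rw [coeff_Rn_of_supp _ _ he, MvPowerSeries.coeff_C]
    by_cases h0 : e = 0
    · subst h0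
      rw [if_pos rfl, if_pos]
      ext s; simp
    · rw [if_neg h0, if_neg]
      intro hc
      apply h0
      ext t
      by_cases ht : t ∈ Set.range u
      · obtain ⟨s, rfl⟩ := ht
        have := Finsupp.ext_iff.mp hc s
        simpa using this
      · by_contra hne
        exact ht (he t hne)
  · rw [coeff_Rn_of_not_supp _ _ he, if_neg]
    rintro rfl
    exact he (by intro t ht; simp at ht)

lemma Rn_X {σ τ : Type*} [Fintype σ] [DecidableEq σ] [DecidableEq τ] {u : σ → τ}
    (hu : Function.Injective u) (s : σ) :
    Rn u (MvPowerSeries.X s : MvPowerSeries σ ℂ) = MvPowerSeries.X (u s) := by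
  apply MvPowerSeries.ext; intro e
  rw [MvPowerSeries.coeff_X]
  by_cases he : Supp u e
  · rw [coeff_Rn_of_supp _ _ he, MvPowerSeries.coeff_X]
    congr 1
    apply propext
    constructor
    · intro h
      rw [← mapDomain_pullb hu he, h, Finsupp.mapDomain_single]
    · intro h
      subst h
      ext t
      simp [Finsupp.single_apply, hu.eq_iff]
  · rw [coeff_Rn_of_not_supp _ _ he, if_neg]
    rintro rfl
    apply he
    intro t ht
    rw [Finsupp.single_apply] at ht
    by_cases hc : u s = t
    · exact ⟨s, hc⟩
    · simp [hc] at ht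

lemma Rn_mul {σ τ : Type*} [Fintype σ] [DecidableEq σ] [DecidableEq τ] {u : σ → τ}
    (hu : Function.Injective u) (f g : MvPowerSeries σ ℂ) :
    Rn u (f * g) = Rn u f * Rn u g := by
  apply MvPowerSeries.ext; intro e
  rw [MvPowerSeries.coeff_mul]
  by_cases he : Supp u e
  · rw [coeff_Rn_of_supp _ _ he, MvPowerSeries.coeff_mul]
    refine Finset.sum_nbij' (fun p => (Finsupp.mapDomain u p.1, Finsupp.mapDomain u p.2))
      (fun p => (pullb u p.1, pullb u p.2)) ?_ ?_ ?_ ?_ ?_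
    · intro p hp
      rw [Finset.HasAntidiagonal.mem_antidiagonal] at hp ⊢
      rw [← Finsupp.mapDomain_add, hp, mapDomain_pullb hu he]
    · intro p hp
      rw [Finset.HasAntidiagonal.mem_antidiagonal] at hp ⊢
      rw [← pullb_add, hp]
    · intro p hp
      rw [Finset.HasAntidiagonal.mem_antidiagonal] at hp
      ext <;> simp [pullb_mapDomain hu]
    · intro p hp
      rw [Finset.HasAntidiagonal.mem_antidiagonal] at hp
      have h1 : Supp u p.1 := Supp_of_le he (add_left_le hp)
      have h2 : Supp u p.2 := Supp_of_le he (add_left_le (by rw [add_comm]; exact hp))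
      ext
      · simp [mapDomain_pullb hu h1]
      · simp [mapDomain_pullb hu h2]
    · intro p hp
      rw [coeff_Rn_mapDomain hu, coeff_Rn_mapDomain hu]
  · rw [coeff_Rn_of_not_supp _ _ he]
    symm
    apply Finset.sum_eq_zero
    intro p hp
    rw [Finset.HasAntidiagonal.mem_antidiagonal] at hp
    by_cases h1 : Supp u p.1
    · by_cases h2 : Supp u p.2
      · exact absurd (hp ▸ Supp_add h1 h2) he
      · rw [coeff_Rn_of_not_supp _ _ h2, mul_zero]
    · rw [coeff_Rn_of_not_supp _ _ h1, zero_mul]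

lemma Supp_comp_iff {σ τ ρ : Type*} {u : σ → τ} {v : τ → ρ} [Fintype σ] [Fintype τ]
    (hv : Function.Injective v) (e : ρ →₀ ℕ) :
    Supp (v ∘ u) e ↔ Supp v e ∧ Supp u (pullb v e) := by
  constructor
  · intro h
    constructor
    · intro t ht
      obtain ⟨s, hs⟩ := h t ht
      exact ⟨u s, hs⟩
    · intro s hs
      obtain ⟨r, hr⟩ := h (v s) hs
      exact ⟨r, hv (by exact hr)⟩
  · rintro ⟨h1, h2⟩ t ht
    obtain ⟨s, rfl⟩ := h1 t ht
    obtain ⟨r, hr⟩ := h2 s ht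
    exact ⟨r, by simp [hr]⟩

lemma Rn_comp {σ τ ρ : Type*} [Fintype σ] [Fintype τ] {u : σ → τ} {v : τ → ρ}
    (hv : Function.Injective v) (f : MvPowerSeries σ ℂ) :
    Rn v (Rn u f) = Rn (v ∘ u) f := by
  apply MvPowerSeries.ext; intro e
  by_cases hve : Supp v e
  · rw [coeff_Rn_of_supp _ _ hve]
    by_cases hue : Supp u (pullb v e)
    · rw [coeff_Rn_of_supp _ _ hue, coeff_Rn_of_supp _ _ ((Supp_comp_iff hv e).mpr ⟨hve, hue⟩)]
      rfl
    · rw [coeff_Rn_of_not_supp _ _ hue, coeff_Rn_of_not_supp _ _ (fun hc =>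
        hue ((Supp_comp_iff hv e).mp hc).2)]
  · rw [coeff_Rn_of_not_supp _ _ hve, coeff_Rn_of_not_supp _ _ (fun hc =>
      hve (fun t ht => by obtain ⟨s, hs⟩ := hc t ht; exact ⟨u s, hs⟩))]

lemma Rn_pder {σ τ : Type*} [Fintype σ] [DecidableEq σ] [DecidableEq τ] {u : σ → τ}
    (hu : Function.Injective u) (i : σ) (f : MvPowerSeries σ ℂ) :
    pder (u i) (Rn u f) = Rn u (pder i f) := by
  apply MvPowerSeries.ext; intro e
  rw [coeff_pder]
  by_cases he : Supp u e
  · have he' : Supp u (e + Finsupp.single (u i) 1) := by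
      apply Supp_add he
      intro t ht
      rw [Finsupp.single_apply] at ht
      by_cases hc : u i = t
      · exact ⟨i, hc⟩
      · simp [hc] at ht
    rw [coeff_Rn_of_supp _ _ he, coeff_Rn_of_supp _ _ he', coeff_pder, pullb_add]
    have : pullb u (Finsupp.single (u i) 1) = Finsupp.single i 1 := by
      ext s; simp [Finsupp.single_apply, hu.eq_iff]
    rw [this]
    rfl
  · have he' : ¬ Supp u (e + Finsupp.single (u i) 1) := by
      intro hc
      apply he
      apply Supp_of_le hc
      intro t; simp
    rw [coeff_Rn_of_not_supp _ _ he, coeff_Rn_of_not_supp _ _ he', mul_zero]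

-- ## xi-elimination

set_option maxHeartbeats 2000000 in
lemma xi_elim {σ : Type*} (ξc : σ) (S g q : MvPowerSeries σ ℂ)
    (hS0 : MvPowerSeries.coeff (R := ℂ) 0 S = 0)
    (hSξ : ∀ E : σ →₀ ℕ, E ξc ≠ 0 → MvPowerSeries.coeff (R := ℂ) E S = 0)
    (hgξ : ∀ E : σ →₀ ℕ, E ξc ≠ 0 → MvPowerSeries.coeff (R := ℂ) E g = 0)
    (hfac : g = q * (MvPowerSeries.X ξc - S)) : g = 0 := by
  classical
  have key : ∀ N : ℕ, ∀ E : σ →₀ ℕ, degf (E.erase ξc) ≤ N → MvPowerSeries.coeff (R := ℂ) E q = 0 := by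
    intro N
    induction N with
    | zero =>
      intro E hE
      have h1 : MvPowerSeries.coeff (R := ℂ) (E + Finsupp.single ξc 1) g = 0 := by
        apply hgξ; simp
      rw [hfac, mul_sub, map_sub, MvPowerSeries.coeff_mul, MvPowerSeries.coeff_mul] at h1
      have h2 : ∀ p ∈ Finset.HasAntidiagonal.antidiagonal (E + Finsupp.single ξc 1),
          MvPowerSeries.coeff (R := ℂ) p.1 q * MvPowerSeries.coeff (R := ℂ) p.2 S = 0 := by
        intro p hp
        rw [Finset.HasAntidiagonal.mem_antidiagonal] at hp
        by_cases hpξ : p.2 ξc ≠ 0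
        · rw [hSξ _ hpξ, mul_zero]
        · push_neg at hpξ
          by_cases hp0 : p.2 = 0
          · rw [hp0, hS0, mul_zero]
          · exfalso
            have e1 : (E.erase ξc) = (p.1.erase ξc) + (p.2.erase ξc) := by
              ext t
              by_cases ht : t = ξc
              · subst ht; simp
              · have := Finsupp.ext_iff.mp hp t
                simp [Finsupp.erase_ne ht, Finsupp.single_apply, Ne.symm ht] at this ⊢
                omega
            have e2 : p.2.erase ξc = p.2 := by
              ext t
              by_cases ht : t = ξc
              · subst ht; simp [hpξ]
              · simp [Finsupp.erase_ne ht]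
            have : degf (p.2.erase ξc) ≠ 0 := by
              rw [e2]; intro hc; exact hp0 ((degf_eq_zero_iff _).mp hc)
            have := degf_add (p.1.erase ξc) (p.2.erase ξc)
            rw [← e1] at this
            omega
      rw [Finset.sum_eq_zero h2, sub_zero] at h1
      rw [Finset.sum_eq_single (E, Finsupp.single ξc 1)] at h1
      · rwa [MvPowerSeries.coeff_X, if_pos rfl, mul_one] at h1
      · intro p hp hne
        rw [Finset.HasAntidiagonal.mem_antidiagonal] at hp
        rw [MvPowerSeries.coeff_X, if_neg, mul_zero]
        intro hc
        exact hne (Prod.ext (add_right_cancel (hc ▸ hp)) hc)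
      · intro h
        exact absurd (by rw [Finset.HasAntidiagonal.mem_antidiagonal]) h
    | succ N ih =>
      intro E hE
      have h1 : MvPowerSeries.coeff (R := ℂ) (E + Finsupp.single ξc 1) g = 0 := by
        apply hgξ; simp
      rw [hfac, mul_sub, map_sub, MvPowerSeries.coeff_mul, MvPowerSeries.coeff_mul] at h1
      have h2 : ∀ p ∈ Finset.HasAntidiagonal.antidiagonal (E + Finsupp.single ξc 1),
          MvPowerSeries.coeff (R := ℂ) p.1 q * MvPowerSeries.coeff (R := ℂ) p.2 S = 0 := by
        intro p hp
        rw [Finset.HasAntidiagonal.mem_antidiagonal] at hp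
        by_cases hpξ : p.2 ξc ≠ 0
        · rw [hSξ _ hpξ, mul_zero]
        · push_neg at hpξ
          by_cases hp0 : p.2 = 0
          · rw [hp0, hS0, mul_zero]
          · have e1 : (E.erase ξc) = (p.1.erase ξc) + (p.2.erase ξc) := by
              ext t
              by_cases ht : t = ξc
              · subst ht; simp
              · have := Finsupp.ext_iff.mp hp t
                simp [Finsupp.erase_ne ht, Finsupp.single_apply, Ne.symm ht] at this ⊢
                omega
            have e2 : p.2.erase ξc = p.2 := by
              ext t
              by_cases ht : t = ξc
              · subst ht; simp [hpξ]
              · simp [Finsupp.erase_ne ht]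
            have hd2 : degf (p.2.erase ξc) ≠ 0 := by
              rw [e2]; intro hc; exact hp0 ((degf_eq_zero_iff _).mp hc)
            have hsum := degf_add (p.1.erase ξc) (p.2.erase ξc)
            rw [← e1] at hsum
            have : degf (p.1.erase ξc) ≤ N := by omega
            rw [ih p.1 this, zero_mul]
      rw [Finset.sum_eq_zero h2, sub_zero] at h1
      rw [Finset.sum_eq_single (E, Finsupp.single ξc 1)] at h1
      · rwa [MvPowerSeries.coeff_X, if_pos rfl, mul_one] at h1
      · intro p hp hne
        rw [Finset.HasAntidiagonal.mem_antidiagonal] at hp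
        rw [MvPowerSeries.coeff_X, if_neg, mul_zero]
        intro hc
        exact hne (Prod.ext (add_right_cancel (hc ▸ hp)) hc)
      · intro h
        exact absurd (by rw [Finset.HasAntidiagonal.mem_antidiagonal]) h
  have hq : q = 0 := by
    apply MvPowerSeries.ext; intro E
    rw [key (degf (E.erase ξc)) E le_rfl]
    simp
  rw [hfac, hq, zero_mul]

-- ## sumElim utilities

lemma sumElim_add {σ τ : Type*} (a c : σ →₀ ℕ) (b d : τ →₀ ℕ) :
    Finsupp.sumElim a b + Finsupp.sumElim c d = Finsupp.sumElim (a + c) (b + d) := by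
  ext x
  cases x <;> simp

lemma sumElim_eq_iff {σ τ : Type*} {a c : σ →₀ ℕ} {b d : τ →₀ ℕ} :
    Finsupp.sumElim a b = Finsupp.sumElim c d ↔ a = c ∧ b = d := by
  constructor
  · intro h
    constructor
    · ext x; have := Finsupp.ext_iff.mp h (Sum.inl x); simpa using this
    · ext y; have := Finsupp.ext_iff.mp h (Sum.inr y); simpa using this
  · rintro ⟨rfl, rfl⟩; rfl

lemma mapDomain_inl_sumElim {σ τ : Type*} (a : σ →₀ ℕ) :
    Finsupp.mapDomain (Sum.inl : σ → σ ⊕ τ) a = Finsupp.sumElim a 0 := by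
  ext t
  cases t with
  | inl x => rw [Finsupp.mapDomain_apply Sum.inl_injective]; simp
  | inr y =>
    rw [Finsupp.mapDomain_notin_range]
    · simp
    · rintro ⟨s, hs⟩; exact nomatch hs

lemma mapDomain_swapElim {σ τ : Type*} (a : σ →₀ ℕ) (b : τ →₀ ℕ) :
    Finsupp.mapDomain (Sum.elim Sum.inr Sum.inl : σ ⊕ τ → τ ⊕ σ) (Finsupp.sumElim a b)
      = Finsupp.sumElim b a := by
  have hinj : Function.Injective (Sum.elim Sum.inr Sum.inl : σ ⊕ τ → τ ⊕ σ) := by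
    rintro (x | y) (x' | y') h <;> simp_all
  ext t
  cases t with
  | inl y =>
    have : (Sum.inl y : τ ⊕ σ) = Sum.elim Sum.inr Sum.inl (Sum.inr y : σ ⊕ τ) := rfl
    rw [this, Finsupp.mapDomain_apply hinj]; simp
  | inr x =>
    have : (Sum.inr x : τ ⊕ σ) = Sum.elim Sum.inr Sum.inl (Sum.inl x : σ ⊕ τ) := rfl
    rw [this, Finsupp.mapDomain_apply hinj]; simp

lemma single_inl_eq {σ τ : Type*} (x : σ) (n : ℕ) :
    Finsupp.single (Sum.inl x : σ ⊕ τ) n = Finsupp.sumElim (Finsupp.single x n) 0 := by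
  ext t
  cases t <;> simp [Finsupp.single_apply]

lemma sumElim_add_single_inl {σ τ : Type*} (d : σ →₀ ℕ) (β : τ →₀ ℕ) (k : σ) (n : ℕ) :
    Finsupp.sumElim d β + Finsupp.single (Sum.inl k : σ ⊕ τ) n
      = Finsupp.sumElim (d + Finsupp.single k n) β := by
  rw [single_inl_eq, sumElim_add, add_zero]

lemma sumElim_pullb {σ τ : Type*} [Fintype σ] [Fintype τ] (E : σ ⊕ τ →₀ ℕ) :
    Finsupp.sumElim (pullb Sum.inl E) (pullb Sum.inr E) = E := by
  ext t; cases t <;> simp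

-- ## key splitting lemma

lemma keySplit {σ τ : Type*} [Fintype σ] [Fintype τ] [DecidableEq σ] [DecidableEq τ]
    (x : MvPowerSeries σ ℂ) (y : MvPowerSeries (σ ⊕ τ) ℂ) (e : σ →₀ ℕ) (β : τ →₀ ℕ) :
    MvPowerSeries.coeff (R := ℂ) (Finsupp.sumElim e β) (Rn Sum.inl x * y)
      = ∑ p ∈ Finset.HasAntidiagonal.antidiagonal e, MvPowerSeries.coeff (R := ℂ) p.1 x *
          MvPowerSeries.coeff (R := ℂ) (Finsupp.sumElim p.2 β) y := by
  rw [MvPowerSeries.coeff_mul]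
  set φ : (σ →₀ ℕ) × (σ →₀ ℕ) → ((σ ⊕ τ) →₀ ℕ) × ((σ ⊕ τ) →₀ ℕ) :=
    fun p => (Finsupp.sumElim p.1 0, Finsupp.sumElim p.2 β) with hφ
  have hsub : (Finset.HasAntidiagonal.antidiagonal e).image φ ⊆ Finset.HasAntidiagonal.antidiagonal (Finsupp.sumElim e β) := by
    intro q hq
    rw [Finset.mem_image] at hq
    obtain ⟨p, hp, rfl⟩ := hq
    rw [Finset.HasAntidiagonal.mem_antidiagonal] at hp
    rw [Finset.HasAntidiagonal.mem_antidiagonal, hφ]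
    simp only
    rw [sumElim_add, hp, zero_add]
  have hvanish : ∀ q ∈ Finset.HasAntidiagonal.antidiagonal (Finsupp.sumElim e β),
      q ∉ (Finset.HasAntidiagonal.antidiagonal e).image φ →
      MvPowerSeries.coeff (R := ℂ) q.1 (Rn Sum.inl x) * MvPowerSeries.coeff (R := ℂ) q.2 y = 0 := by
    intro q hq hnq
    rw [Finset.HasAntidiagonal.mem_antidiagonal] at hq
    by_cases hS : Supp (Sum.inl : σ → σ ⊕ τ) q.1
    · exfalso
      apply hnq
      rw [Finset.mem_image]
      refine ⟨(pullb Sum.inl q.1, pullb Sum.inl q.2), ?_, ?_⟩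
      · rw [Finset.HasAntidiagonal.mem_antidiagonal]
        ext s
        have := Finsupp.ext_iff.mp hq (Sum.inl s)
        simpa using this
      · have h1 : q.1 = Finsupp.sumElim (pullb Sum.inl q.1) 0 := by
          ext t
          cases t with
          | inl s => simp
          | inr u =>
            simp only [Finsupp.sumElim_inr, Finsupp.coe_zero, Pi.zero_apply]
            by_contra hc
            obtain ⟨s, hs⟩ := hS (Sum.inr u) hc
            exact nomatch hs
        have h2 : q.2 = Finsupp.sumElim (pullb Sum.inl q.2) β := by
          ext t
          cases t with
          | inl s => simp
          | inr u =>
            have hq1 : q.1 (Sum.inr u) = 0 := by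
              by_contra hc
              obtain ⟨s, hs⟩ := hS (Sum.inr u) hc
              exact nomatch hs
            have := Finsupp.ext_iff.mp hq (Sum.inr u)
            simp only [Finsupp.add_apply, Finsupp.sumElim_inr, hq1, zero_add] at this
            simpa using this
        rw [hφ]
        simp only
        rw [← h1, ← h2]
    · rw [coeff_Rn_of_not_supp _ _ hS, zero_mul]
  rw [← Finset.sum_subset hsub hvanish, Finset.sum_image]
  · apply Finset.sum_congr rfl
    intro p hp
    rw [hφ]
    simp only
    rw [← mapDomain_inl_sumElim, coeff_Rn_mapDomain Sum.inl_injective]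
  · intro p hp p' hp' hpp
    rw [hφ] at hpp
    simp only [Prod.mk.injEq] at hpp
    obtain ⟨h1, h2⟩ := hpp
    rw [sumElim_eq_iff] at h1 h2
    exact Prod.ext h1.1 h2.1

-- ## geometry

def u0 (m : ℕ) : (Fin m ⊕ (Fin m ⊕ Unit)) → ((Fin m ⊕ Unit) ⊕ Fin m) :=
  Sum.elim Sum.inr Sum.inl

def wm (m : ℕ) : ((Fin m ⊕ Unit) ⊕ Fin m) → ((Fin m ⊕ Unit) ⊕ (Fin m ⊕ Unit)) :=
  Sum.elim Sum.inl (fun j => Sum.inr (Sum.inl j))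

lemma u0_inj (m : ℕ) : Function.Injective (u0 m) := by
  rintro (a | b) (c | d) h <;> simp [u0] at h <;> simp [h]

lemma wm_inj (m : ℕ) : Function.Injective (wm m) := by
  rintro (a | b) (c | d) h <;> simp [wm] at h <;> simp [h]

def rbar0 (m : ℕ) (Θ : MvPowerSeries (Fin m ⊕ (Fin m ⊕ Unit)) ℂ) :
    MvPowerSeries ((Fin m ⊕ Unit) ⊕ Fin m) ℂ :=
  -(MvPowerSeries.X (Sum.inl (Sum.inr ()))) +
    (MvPowerSeries.C (σ := _) (R := ℂ)) Complex.I * Rn (u0 m) (conjS Θ)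

def LHSf (m : ℕ) (Θ : MvPowerSeries (Fin m ⊕ (Fin m ⊕ Unit)) ℂ)
    (a : (Fin m ⊕ Unit) → MvPowerSeries (Fin m ⊕ Unit) ℂ) (β : Fin m →₀ ℕ) :
    MvPowerSeries (Fin m ⊕ Unit) ℂ :=
  ∑ k : Fin m ⊕ Unit, a k * pder k (thetaCoef m Θ β)

def g0 (m : ℕ) (Θ : MvPowerSeries (Fin m ⊕ (Fin m ⊕ Unit)) ℂ)
    (a : (Fin m ⊕ Unit) → MvPowerSeries (Fin m ⊕ Unit) ℂ) :
    MvPowerSeries ((Fin m ⊕ Unit) ⊕ Fin m) ℂ :=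
  ∑ k : Fin m ⊕ Unit, Rn Sum.inl (a k) * pder (Sum.inl k) (rbar0 m Θ)

lemma coeff_thetaCoef (m : ℕ) (Θ : MvPowerSeries (Fin m ⊕ (Fin m ⊕ Unit)) ℂ)
    {β : Fin m →₀ ℕ} (hβ : β ≠ 0) (d : (Fin m ⊕ Unit) →₀ ℕ) :
    MvPowerSeries.coeff (R := ℂ) d (thetaCoef m Θ β)
      = MvPowerSeries.coeff (R := ℂ) (Finsupp.sumElim β d) (conjS Θ) := by
  simp only [thetaCoef, hβ, if_false]; rfl

lemma thetaCoef_zero (m : ℕ) (Θ : MvPowerSeries (Fin m ⊕ (Fin m ⊕ Unit)) ℂ) :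
    thetaCoef m Θ 0 = MvPowerSeries.X (Sum.inr ()) := by
  unfold thetaCoef; exact if_pos rfl

lemma coeff_conjS_zeroleft (m : ℕ) {Θ : MvPowerSeries (Fin m ⊕ (Fin m ⊕ Unit)) ℂ}
    (hNV : NormVanish m Θ) (d : (Fin m ⊕ Unit) →₀ ℕ) :
    MvPowerSeries.coeff (R := ℂ) (Finsupp.sumElim 0 d) (conjS Θ) = 0 := by
  rw [conjS, MvPowerSeries.coeff_map, hNV.1 _ (by simp), map_zero]

lemma coeff_Rn_u0 (m : ℕ) (f : MvPowerSeries (Fin m ⊕ (Fin m ⊕ Unit)) ℂ)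
    (d : (Fin m ⊕ Unit) →₀ ℕ) (β : Fin m →₀ ℕ) :
    MvPowerSeries.coeff (R := ℂ) (Finsupp.sumElim d β) (Rn (u0 m) f)
      = MvPowerSeries.coeff (R := ℂ) (Finsupp.sumElim β d) f := by
  rw [← mapDomain_swapElim β d]
  exact coeff_Rn_mapDomain (u0_inj m) f _

lemma coeff_rbar0 (m : ℕ) (Θ : MvPowerSeries (Fin m ⊕ (Fin m ⊕ Unit)) ℂ)
    (d : (Fin m ⊕ Unit) →₀ ℕ) (β : Fin m →₀ ℕ) :
    MvPowerSeries.coeff (R := ℂ) (Finsupp.sumElim d β) (rbar0 m Θ)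
      = -(if β = 0 ∧ d = Finsupp.single (Sum.inr ()) 1 then 1 else 0)
        + Complex.I * MvPowerSeries.coeff (R := ℂ) (Finsupp.sumElim β d) (conjS Θ) := by
  rw [rbar0, map_add, map_neg, MvPowerSeries.coeff_C_mul, MvPowerSeries.coeff_X,
    coeff_Rn_u0]
  congr 2
  apply if_congr _ rfl rfl
  rw [single_inl_eq, sumElim_eq_iff]
  constructor
  · rintro ⟨h1, h2⟩; exact ⟨h2, h1⟩
  · rintro ⟨h1, h2⟩; exact ⟨h2, h1⟩

lemma coeff_pder_rbar0 (m : ℕ) (Θ : MvPowerSeries (Fin m ⊕ (Fin m ⊕ Unit)) ℂ)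
    (d : (Fin m ⊕ Unit) →₀ ℕ) (β : Fin m →₀ ℕ) (k : Fin m ⊕ Unit) :
    MvPowerSeries.coeff (R := ℂ) (Finsupp.sumElim d β) (pder (Sum.inl k) (rbar0 m Θ))
      = ((d k + 1 : ℕ) : ℂ) *
        (-(if β = 0 ∧ d + Finsupp.single k 1 = Finsupp.single (Sum.inr ()) 1 then 1 else 0)
          + Complex.I *
            MvPowerSeries.coeff (R := ℂ) (Finsupp.sumElim β (d + Finsupp.single k 1)) (conjS Θ)) := by
  rw [coeff_pder, sumElim_add_single_inl, coeff_rbar0]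
  rfl

lemma LHSf_zero (m : ℕ) (Θ : MvPowerSeries (Fin m ⊕ (Fin m ⊕ Unit)) ℂ)
    (a : (Fin m ⊕ Unit) → MvPowerSeries (Fin m ⊕ Unit) ℂ) :
    LHSf m Θ a 0 = a (Sum.inr ()) := by
  rw [LHSf]
  rw [Fintype.sum_sum_type]
  have h1 : ∀ j : Fin m, a (Sum.inl j) * pder (Sum.inl j) (thetaCoef m Θ 0) = 0 := by
    intro j
    rw [thetaCoef_zero, pder_X, if_neg (by simp), mul_zero]
  have h2 : a (Sum.inr ()) * pder (Sum.inr ()) (thetaCoef m Θ 0) = a (Sum.inr ()) := by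
    rw [thetaCoef_zero, pder_X, if_pos rfl, mul_one]
  rw [Finset.sum_eq_zero (fun j _ => h1 j), zero_add]
  simpa using h2

lemma coeff_LHSf (m : ℕ) (Θ : MvPowerSeries (Fin m ⊕ (Fin m ⊕ Unit)) ℂ)
    (a : (Fin m ⊕ Unit) → MvPowerSeries (Fin m ⊕ Unit) ℂ) {β : Fin m →₀ ℕ} (hβ : β ≠ 0)
    (e : (Fin m ⊕ Unit) →₀ ℕ) :
    MvPowerSeries.coeff (R := ℂ) e (LHSf m Θ a β)
      = ∑ k : Fin m ⊕ Unit, ∑ p ∈ Finset.HasAntidiagonal.antidiagonal e,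
          MvPowerSeries.coeff (R := ℂ) p.1 (a k) * (((p.2 k + 1 : ℕ) : ℂ) *
            MvPowerSeries.coeff (R := ℂ) (Finsupp.sumElim β (p.2 + Finsupp.single k 1)) (conjS Θ)) := by
  rw [LHSf, map_sum]
  apply Finset.sum_congr rfl
  intro k _
  rw [MvPowerSeries.coeff_mul]
  apply Finset.sum_congr rfl
  intro p _
  rw [coeff_pder, coeff_thetaCoef m Θ hβ]

lemma coeff_g0 (m : ℕ) (Θ : MvPowerSeries (Fin m ⊕ (Fin m ⊕ Unit)) ℂ)
    (hNV : NormVanish m Θ) (a : (Fin m ⊕ Unit) → MvPowerSeries (Fin m ⊕ Unit) ℂ)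
    (e : (Fin m ⊕ Unit) →₀ ℕ) (β : Fin m →₀ ℕ) :
    MvPowerSeries.coeff (R := ℂ) (Finsupp.sumElim e β) (g0 m Θ a)
      = if β = 0 then -(MvPowerSeries.coeff (R := ℂ) e (a (Sum.inr ())))
        else Complex.I * MvPowerSeries.coeff (R := ℂ) e (LHSf m Θ a β) := by
  rw [g0, map_sum]
  have hstep : ∀ k : Fin m ⊕ Unit,
      MvPowerSeries.coeff (R := ℂ) (Finsupp.sumElim e β) (Rn Sum.inl (a k) * pder (Sum.inl k) (rbar0 m Θ))
        = ∑ p ∈ Finset.HasAntidiagonal.antidiagonal e, MvPowerSeries.coeff (R := ℂ) p.1 (a k) *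
            (((p.2 k + 1 : ℕ) : ℂ) *
              (-(if β = 0 ∧ p.2 + Finsupp.single k 1 = Finsupp.single (Sum.inr ()) 1
                  then 1 else 0)
                + Complex.I * MvPowerSeries.coeff (R := ℂ)
                    (Finsupp.sumElim β (p.2 + Finsupp.single k 1)) (conjS Θ))) := by
    intro k
    rw [keySplit]
    apply Finset.sum_congr rfl
    intro p _
    rw [coeff_pder_rbar0]
  simp only [hstep]
  by_cases hβ : β = 0
  · subst hβ
    rw [if_pos rfl]
    have hz : ∀ d : (Fin m ⊕ Unit) →₀ ℕ,
        MvPowerSeries.coeff (R := ℂ) (Finsupp.sumElim (0 : Fin m →₀ ℕ) d) (conjS Θ) = 0 :=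
      coeff_conjS_zeroleft m hNV
    simp only [hz, mul_zero, add_zero, if_pos, true_and]
    rw [Fintype.sum_sum_type]
    have hl : ∀ j : Fin m, (∑ p ∈ Finset.HasAntidiagonal.antidiagonal e,
        MvPowerSeries.coeff (R := ℂ) p.1 (a (Sum.inl j)) * (((p.2 (Sum.inl j) + 1 : ℕ) : ℂ) *
          -(if p.2 + Finsupp.single (Sum.inl j) 1 = Finsupp.single (Sum.inr ()) 1
            then 1 else 0))) = 0 := by
      intro j
      apply Finset.sum_eq_zero
      intro p _
      rw [if_neg, neg_zero, mul_zero, mul_zero]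
      intro hc
      have := Finsupp.ext_iff.mp hc (Sum.inl j)
      simp [Finsupp.single_apply] at this
    rw [Finset.sum_eq_zero (fun j _ => hl j), zero_add]
    have : ∀ u : Unit, (∑ p ∈ Finset.HasAntidiagonal.antidiagonal e,
        MvPowerSeries.coeff (R := ℂ) p.1 (a (Sum.inr u)) * (((p.2 (Sum.inr u) + 1 : ℕ) : ℂ) *
          -(if p.2 + Finsupp.single (Sum.inr u) 1 = Finsupp.single (Sum.inr ()) 1
            then 1 else 0))) = -(MvPowerSeries.coeff (R := ℂ) e (a (Sum.inr ()))) := by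
      intro u
      rw [Finset.sum_eq_single (e, (0 : (Fin m ⊕ Unit) →₀ ℕ))]
      · simp
      · intro p hp hne
        rw [Finset.HasAntidiagonal.mem_antidiagonal] at hp
        rw [if_neg, neg_zero, mul_zero, mul_zero]
        intro hc
        rw [add_eq_right] at hc
        exact hne (Prod.ext (by rw [← hp, hc, add_zero]) hc)
      · intro h
        exact absurd (by rw [Finset.HasAntidiagonal.mem_antidiagonal, add_zero]) h
    simpa using this ()
  · rw [if_neg hβ, coeff_LHSf m Θ a hβ, Finset.mul_sum]
    apply Finset.sum_congr rfl
    intro k _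
    rw [Finset.mul_sum]
    apply Finset.sum_congr rfl
    intro p _
    have : (if β = 0 ∧ p.2 + Finsupp.single k 1 = Finsupp.single (Sum.inr ()) 1
        then (1 : ℂ) else 0) = 0 := by
      rw [if_neg]; rintro ⟨h, _⟩; exact hβ h
    rw [this, neg_zero, zero_add]
    ring

lemma g0_eq_zero_iff (m : ℕ) (Θ : MvPowerSeries (Fin m ⊕ (Fin m ⊕ Unit)) ℂ)
    (hNV : NormVanish m Θ) (a : (Fin m ⊕ Unit) → MvPowerSeries (Fin m ⊕ Unit) ℂ) :
    g0 m Θ a = 0 ↔ ∀ β : Fin m →₀ ℕ, LHSf m Θ a β = 0 := by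
  constructor
  · intro h β
    apply MvPowerSeries.ext
    intro e
    have hc := coeff_g0 m Θ hNV a e β
    rw [h, map_zero] at hc
    by_cases hβ : β = 0
    · subst hβ
      rw [if_pos rfl] at hc
      rw [LHSf_zero, map_zero, ← neg_eq_zero]
      exact hc.symm
    · rw [if_neg hβ] at hc
      rw [map_zero]
      have := hc.symm
      rcases mul_eq_zero.mp this with h1 | h1
      · exact absurd h1 Complex.I_ne_zero
      · exact h1
  · intro h
    apply MvPowerSeries.ext
    intro E
    rw [map_zero, ← sumElim_pullb E, coeff_g0 m Θ hNV a _ _]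
    by_cases hβ : pullb Sum.inr E = (0 : Fin m →₀ ℕ)
    · rw [if_pos hβ, ← LHSf_zero m Θ a, h 0, map_zero, neg_zero]
    · rw [if_neg hβ, h _, map_zero, mul_zero]

lemma rbar_eq (m : ℕ) (Θ : MvPowerSeries (Fin m ⊕ (Fin m ⊕ Unit)) ℂ) :
    rbarSeries m Θ = MvPowerSeries.X (Sum.inr (Sum.inr ())) + Rn (wm m) (rbar0 m Θ) := by
  rw [rbarSeries, rbar0, Rn_add (wm m), Rn_neg (wm m), Rn_mul (wm_inj m), Rn_C (wm m)]
  have hx : Rn (wm m) (MvPowerSeries.X (Sum.inl (Sum.inr ())) :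
      MvPowerSeries ((Fin m ⊕ Unit) ⊕ Fin m) ℂ)
      = MvPowerSeries.X (Sum.inl (Sum.inr ())) := Rn_X (wm_inj m) _
  rw [hx]
  have hre : msubst (Sum.elim (fun j => MvPowerSeries.X (Sum.inr (Sum.inl j)))
      (Sum.elim (fun j => MvPowerSeries.X (Sum.inl (Sum.inl j)))
        (fun _ => MvPowerSeries.X (Sum.inl (Sum.inr ()))))) (conjS Θ)
      = Rn (wm m) (Rn (u0 m) (conjS Θ)) := by
    rw [Rn_comp (wm_inj m)]
    have : (Sum.elim (fun j => MvPowerSeries.X (Sum.inr (Sum.inl j)))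
        (Sum.elim (fun j => MvPowerSeries.X (Sum.inl (Sum.inl j)))
          (fun _ => MvPowerSeries.X (Sum.inl (Sum.inr ())))) :
        (Fin m ⊕ (Fin m ⊕ Unit)) → MvPowerSeries ((Fin m ⊕ Unit) ⊕ (Fin m ⊕ Unit)) ℂ)
        = fun s => MvPowerSeries.X ((wm m ∘ u0 m) s) := by
      funext s
      rcases s with j | (j | u) <;> rfl
    rw [this]
    exact msubst_X_eq_Rn ((wm_inj m).comp (u0_inj m)) (conjS Θ)
  rw [hre]
  ring

lemma IsConv_zero {σ : Type*} : IsConv (0 : MvPowerSeries σ ℂ) :=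
  ⟨0, 1, one_pos, fun d => by simp⟩

lemma msubst_inl_eq_Rn (m : ℕ) (f : MvPowerSeries (Fin m ⊕ Unit) ℂ) :
    msubst (fun k => (MvPowerSeries.X (Sum.inl k) :
        MvPowerSeries ((Fin m ⊕ Unit) ⊕ (Fin m ⊕ Unit)) ℂ)) f = Rn Sum.inl f :=
  msubst_X_eq_Rn Sum.inl_injective f

lemma gsum_eq (m : ℕ) (Θ : MvPowerSeries (Fin m ⊕ (Fin m ⊕ Unit)) ℂ)
    (a : (Fin m ⊕ Unit) → MvPowerSeries (Fin m ⊕ Unit) ℂ) :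
    (∑ k : Fin m ⊕ Unit,
        msubst (fun j => MvPowerSeries.X (Sum.inl j)) (a k) *
          pder (Sum.inl k) (rbarSeries m Θ))
      = Rn (wm m) (g0 m Θ a) := by
  rw [g0, Rn_sum]
  apply Finset.sum_congr rfl
  intro k _
  rw [msubst_inl_eq_Rn, rbar_eq, pder_add, pder_X, if_neg (by simp),
    Rn_mul (wm_inj m)]
  have h1 : Rn (wm m) (Rn Sum.inl (a k)) = Rn Sum.inl (a k) := by
    rw [Rn_comp (wm_inj m)]
    rfl
  have h2 : pder (Sum.inl k) (Rn (wm m) (rbar0 m Θ))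
      = Rn (wm m) (pder (Sum.inl k) (rbar0 m Θ)) := by
    have : (Sum.inl k : (Fin m ⊕ Unit) ⊕ (Fin m ⊕ Unit)) = wm m (Sum.inl k) := rfl
    rw [this, Rn_pder (wm_inj m)]
  rw [h1, zero_add, h2]

lemma tangency_iff (m : ℕ) (Θ : MvPowerSeries (Fin m ⊕ (Fin m ⊕ Unit)) ℂ)
    (hNV : NormVanish m Θ) (a : (Fin m ⊕ Unit) → MvPowerSeries (Fin m ⊕ Unit) ℂ) :
    (∃ q : MvPowerSeries ((Fin m ⊕ Unit) ⊕ (Fin m ⊕ Unit)) ℂ, IsConv q ∧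
      (∑ k : Fin m ⊕ Unit,
        msubst (fun j => MvPowerSeries.X (Sum.inl j)) (a k) *
          pder (Sum.inl k) (rbarSeries m Θ))
      = q * rbarSeries m Θ)
    ↔ ∀ β : Fin m →₀ ℕ, LHSf m Θ a β = 0 := by
  have hxir : (Sum.inr (Sum.inr ()) : (Fin m ⊕ Unit) ⊕ (Fin m ⊕ Unit)) ∉
      Set.range (wm m) := by
    rintro ⟨(k | j), h⟩
    · simp [wm] at h
    · simp [wm] at h
  constructor
  · rintro ⟨q, _, hq⟩
    rw [gsum_eq] at hq
    have hS : rbarSeries m Θ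
        = MvPowerSeries.X (Sum.inr (Sum.inr ())) - (-(Rn (wm m) (rbar0 m Θ))) := by
      rw [rbar_eq]; ring
    rw [hS] at hq
    have hzero := xi_elim (Sum.inr (Sum.inr ())) (-(Rn (wm m) (rbar0 m Θ)))
      (Rn (wm m) (g0 m Θ a)) q ?_ ?_ ?_ hq
    · intro β
      apply MvPowerSeries.ext
      intro d
      have : MvPowerSeries.coeff (R := ℂ) (Finsupp.mapDomain (wm m) (Finsupp.sumElim d β))
          (Rn (wm m) (g0 m Θ a)) = 0 := by rw [hzero, map_zero]
      rw [coeff_Rn_mapDomain (wm_inj m)] at this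
      rw [coeff_g0 m Θ hNV a d β] at this
      by_cases hβ : β = 0
      · subst hβ
        rw [if_pos rfl, neg_eq_zero] at this
        rw [LHSf_zero, map_zero]
        exact this
      · rw [if_neg hβ] at this
        rw [map_zero]
        rcases mul_eq_zero.mp this with h1 | h1
        · exact absurd h1 Complex.I_ne_zero
        · exact h1
    · rw [map_neg, neg_eq_zero]
      have h0 : (0 : ((Fin m ⊕ Unit) ⊕ (Fin m ⊕ Unit)) →₀ ℕ)
          = Finsupp.mapDomain (wm m) 0 := by simp
      rw [h0, coeff_Rn_mapDomain (wm_inj m), rbar0, map_add, map_neg,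
        MvPowerSeries.coeff_C_mul]
      have h0' : (0 : ((Fin m ⊕ Unit) ⊕ Fin m) →₀ ℕ)
          = Finsupp.sumElim 0 0 := by ext t; cases t <;> simp
      rw [h0', coeff_Rn_u0, coeff_conjS_zeroleft m hNV, mul_zero, add_zero,
        MvPowerSeries.coeff_X, if_neg, neg_zero]
      intro hc
      have := Finsupp.ext_iff.mp hc (Sum.inl (Sum.inr ()))
      simp at this
    · intro E hE
      rw [map_neg, neg_eq_zero]
      apply coeff_Rn_of_not_supp
      intro hc
      exact hxir (hc _ hE)
    · intro E hE
      apply coeff_Rn_of_not_supp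
      intro hc
      exact hxir (hc _ hE)
  · intro h
    refine ⟨0, IsConv_zero, ?_⟩
    rw [gsum_eq, (g0_eq_zero_iff m Θ hNV a).mpr h, Rn_zero, zero_mul]

-- ## convergence lemmas

lemma IsConv_nonneg {σ : Type*} {f : MvPowerSeries σ ℂ} {C r : ℝ}
    (h : ∀ d : σ →₀ ℕ, ‖MvPowerSeries.coeff (R := ℂ) d f‖ * r ^ degf d ≤ C) : 0 ≤ C := by
  have := h 0
  rw [degf_zero, pow_zero, mul_one] at this
  exact le_trans (norm_nonneg _) this

lemma IsConv_C {σ : Type*} (c : ℂ) : IsConv (MvPowerSeries.C (σ := σ) (R := ℂ) c) := by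
  refine ⟨‖c‖, 1, one_pos, fun d => ?_⟩
  rw [MvPowerSeries.coeff_C, one_pow, mul_one]
  split
  · rfl
  · simp

lemma IsConv_one {σ : Type*} : IsConv (1 : MvPowerSeries σ ℂ) := by
  have := IsConv_C (σ := σ) 1
  rwa [map_one] at this

lemma IsConv_X {σ : Type*} [DecidableEq σ] (s : σ) :
    IsConv (MvPowerSeries.X s : MvPowerSeries σ ℂ) := by
  refine ⟨1, 1, one_pos, fun d => ?_⟩
  rw [MvPowerSeries.coeff_X, one_pow, mul_one]
  split
  · simp
  · simp

lemma IsConv_neg {σ : Type*} {f : MvPowerSeries σ ℂ} (hf : IsConv f) : IsConv (-f) := by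
  obtain ⟨C, r, hr, hb⟩ := hf
  exact ⟨C, r, hr, fun d => by rw [map_neg, norm_neg]; exact hb d⟩

lemma IsConv_shrink {σ : Type*} {f : MvPowerSeries σ ℂ} {C r r' : ℝ} (hr' : 0 < r')
    (hle : r' ≤ r) (hb : ∀ d : σ →₀ ℕ, ‖MvPowerSeries.coeff (R := ℂ) d f‖ * r ^ degf d ≤ C) :
    ∀ d : σ →₀ ℕ, ‖MvPowerSeries.coeff (R := ℂ) d f‖ * r' ^ degf d ≤ C := by
  intro d
  refine le_trans ?_ (hb d)
  apply mul_le_mul_of_nonneg_left _ (norm_nonneg _)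
  exact pow_le_pow_left₀ hr'.le hle _

lemma IsConv_add {σ : Type*} {f g : MvPowerSeries σ ℂ} (hf : IsConv f) (hg : IsConv g) :
    IsConv (f + g) := by
  obtain ⟨Cf, rf, hrf, hbf⟩ := hf
  obtain ⟨Cg, rg, hrg, hbg⟩ := hg
  have h0 : 0 < min rf rg := lt_min hrf hrg
  refine ⟨Cf + Cg, min rf rg, h0, fun d => ?_⟩
  rw [map_add]
  calc ‖MvPowerSeries.coeff (R := ℂ) d f + MvPowerSeries.coeff (R := ℂ) d g‖ * (min rf rg) ^ degf d
      ≤ (‖MvPowerSeries.coeff (R := ℂ) d f‖ + ‖MvPowerSeries.coeff (R := ℂ) d g‖) * (min rf rg) ^ degf d := by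
        apply mul_le_mul_of_nonneg_right (norm_add_le _ _) (by positivity)
    _ = ‖MvPowerSeries.coeff (R := ℂ) d f‖ * (min rf rg) ^ degf d
        + ‖MvPowerSeries.coeff (R := ℂ) d g‖ * (min rf rg) ^ degf d := by ring
    _ ≤ Cf + Cg := add_le_add
        (IsConv_shrink h0 (min_le_left _ _) hbf d)
        (IsConv_shrink h0 (min_le_right _ _) hbg d)

lemma card_antidiagonal_le {σ : Type*} [DecidableEq σ] (d : σ →₀ ℕ) :
    (Finset.HasAntidiagonal.antidiagonal d).card ≤ 2 ^ degf d := by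
  have h1 : (Finset.HasAntidiagonal.antidiagonal d).card ≤ (Finset.Iic d).card := by
    apply Finset.card_le_card_of_injOn Prod.fst
    · intro p hp
      rw [Finset.mem_coe, Finset.HasAntidiagonal.mem_antidiagonal] at hp
      rw [Finset.mem_coe, Finset.mem_Iic]
      exact add_left_le hp
    · intro p hp q hq hpq
      rw [Finset.mem_coe, Finset.HasAntidiagonal.mem_antidiagonal] at hp hq
      apply Prod.ext hpq
      have : p.1 + p.2 = p.1 + q.2 := by rw [hp, hpq, hq]
      exact add_left_cancel this
  have h2 : (Finset.Iic d).card = ∏ i ∈ d.support, (d i + 1) := by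
    rw [Finsupp.card_Iic]
    apply Finset.prod_congr rfl
    intro i _
    exact Nat.card_Iic _
  calc (Finset.HasAntidiagonal.antidiagonal d).card ≤ ∏ i ∈ d.support, (d i + 1) := h1.trans h2.le
    _ ≤ ∏ i ∈ d.support, 2 ^ d i := by
        apply Finset.prod_le_prod'
        intro i _
        exact Nat.lt_two_pow_self
    _ = 2 ^ (∑ i ∈ d.support, d i) := Finset.prod_pow_eq_pow_sum _ _ _
    _ = 2 ^ degf d := rfl

lemma IsConv_mul {σ : Type*} [DecidableEq σ] {f g : MvPowerSeries σ ℂ}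
    (hf : IsConv f) (hg : IsConv g) : IsConv (f * g) := by
  obtain ⟨Cf, rf, hrf, hbf⟩ := hf
  obtain ⟨Cg, rg, hrg, hbg⟩ := hg
  have hCf : 0 ≤ Cf := IsConv_nonneg hbf
  have hCg : 0 ≤ Cg := IsConv_nonneg hbg
  set r0 := min rf rg with hr0def
  have hr0 : 0 < r0 := lt_min hrf hrg
  have hbf' := IsConv_shrink hr0 (min_le_left _ _) hbf
  have hbg' := IsConv_shrink hr0 (min_le_right _ _) hbg
  refine ⟨Cf * Cg, r0 / 2, by positivity, fun d => ?_⟩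
  have hcoef : ‖MvPowerSeries.coeff (R := ℂ) d (f * g)‖
      ≤ ∑ p ∈ Finset.HasAntidiagonal.antidiagonal d, ‖MvPowerSeries.coeff (R := ℂ) p.1 f‖ *
        ‖MvPowerSeries.coeff (R := ℂ) p.2 g‖ := by
    rw [MvPowerSeries.coeff_mul]
    refine le_trans (norm_sum_le _ _) ?_
    apply Finset.sum_le_sum
    intro p _
    rw [norm_mul]
  calc ‖MvPowerSeries.coeff (R := ℂ) d (f * g)‖ * (r0 / 2) ^ degf d
      ≤ (∑ p ∈ Finset.HasAntidiagonal.antidiagonal d, ‖MvPowerSeries.coeff (R := ℂ) p.1 f‖ *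
          ‖MvPowerSeries.coeff (R := ℂ) p.2 g‖) * (r0 / 2) ^ degf d := by
        apply mul_le_mul_of_nonneg_right hcoef (by positivity)
    _ = ∑ p ∈ Finset.HasAntidiagonal.antidiagonal d, (‖MvPowerSeries.coeff (R := ℂ) p.1 f‖ *
          ‖MvPowerSeries.coeff (R := ℂ) p.2 g‖ * r0 ^ degf d) * (1 / 2 : ℝ) ^ degf d := by
        rw [Finset.sum_mul]
        apply Finset.sum_congr rfl
        intro p _
        have : (r0 / 2) ^ degf d = r0 ^ degf d * (1 / 2 : ℝ) ^ degf d := by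
          rw [← mul_pow]; ring_nf
        rw [this]; ring
    _ ≤ ∑ p ∈ Finset.HasAntidiagonal.antidiagonal d, (Cf * Cg) * (1 / 2 : ℝ) ^ degf d := by
        apply Finset.sum_le_sum
        intro p hp
        apply mul_le_mul_of_nonneg_right _ (by positivity)
        rw [Finset.HasAntidiagonal.mem_antidiagonal] at hp
        have hdeg : degf d = degf p.1 + degf p.2 := by rw [← hp, degf_add]
        calc ‖MvPowerSeries.coeff (R := ℂ) p.1 f‖ * ‖MvPowerSeries.coeff (R := ℂ) p.2 g‖ * r0 ^ degf d
            = (‖MvPowerSeries.coeff (R := ℂ) p.1 f‖ * r0 ^ degf p.1) *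
              (‖MvPowerSeries.coeff (R := ℂ) p.2 g‖ * r0 ^ degf p.2) := by
              rw [hdeg, pow_add]; ring
          _ ≤ Cf * Cg := mul_le_mul (hbf' p.1) (hbg' p.2) (by positivity) hCf
    _ = (Finset.HasAntidiagonal.antidiagonal d).card * ((Cf * Cg) * (1 / 2 : ℝ) ^ degf d) := by
        rw [Finset.sum_const, nsmul_eq_mul]
    _ ≤ (2 ^ degf d : ℕ) * ((Cf * Cg) * (1 / 2 : ℝ) ^ degf d) := by
        apply mul_le_mul_of_nonneg_right _ (by positivity)
        exact_mod_cast card_antidiagonal_le d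
    _ = (Cf * Cg) * ((2 : ℝ) ^ degf d * (1 / 2 : ℝ) ^ degf d) := by push_cast; ring
    _ = Cf * Cg := by rw [← mul_pow]; norm_num

lemma IsConv_sum {σ ι : Type*} (s : Finset ι) (F : ι → MvPowerSeries σ ℂ)
    (h : ∀ i ∈ s, IsConv (F i)) : IsConv (∑ i ∈ s, F i) := by
  classical
  induction s using Finset.induction with
  | empty => simpa using IsConv_zero
  | @insert i s his ih =>
    rw [Finset.sum_insert his]
    exact IsConv_add (h i (Finset.mem_insert_self _ _))
      (ih fun j hj => h j (Finset.mem_insert_of_mem hj))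

lemma IsConv_prod {σ ι : Type*} [DecidableEq σ] (s : Finset ι) (F : ι → MvPowerSeries σ ℂ)
    (h : ∀ i ∈ s, IsConv (F i)) : IsConv (∏ i ∈ s, F i) := by
  classical
  induction s using Finset.induction with
  | empty => simpa using IsConv_one
  | @insert i s his ih =>
    rw [Finset.prod_insert his]
    exact IsConv_mul (h i (Finset.mem_insert_self _ _))
      (ih fun j hj => h j (Finset.mem_insert_of_mem hj))

lemma IsConv_det {κ σ : Type*} [Fintype κ] [DecidableEq κ] [DecidableEq σ]
    (A : Matrix κ κ (MvPowerSeries σ ℂ)) (h : ∀ i j, IsConv (A i j)) :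
    IsConv A.det := by
  rw [Matrix.det_apply]
  apply IsConv_sum
  intro p _
  have hprod : IsConv (∏ i, A (p i) i) := IsConv_prod _ _ (fun i _ => h _ _)
  rcases Int.units_eq_one_or (Equiv.Perm.sign p) with hs | hs
  · rw [hs]
    simpa using hprod
  · rw [hs]
    have : ((-1 : ℤˣ) • (∏ i, A (p i) i)) = -(∏ i, A (p i) i) := by
      rw [Units.smul_def]
      push_cast
      rw [neg_smul, one_smul]
    rw [this]
    exact IsConv_neg hprod

lemma IsConv_pder {σ : Type*} [DecidableEq σ] {f : MvPowerSeries σ ℂ} (hf : IsConv f)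
    (i : σ) : IsConv (pder i f) := by
  obtain ⟨C, r, hr, hb⟩ := hf
  have hC : 0 ≤ C := IsConv_nonneg hb
  refine ⟨2 * C / r, r / 2, by positivity, fun d => ?_⟩
  set N := degf d with hN
  have hdeg : degf (d + Finsupp.single i 1) = N + 1 := by
    rw [degf_add, degf_single]
  have h1 : ‖MvPowerSeries.coeff (R := ℂ) (d + Finsupp.single i 1) f‖ * r ^ (N + 1) ≤ C := by
    rw [← hdeg]; exact hb _
  have hstep1 : ((d i + 1 : ℕ) : ℝ) ≤ (2 : ℝ) ^ N * 2 := by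
    have hle : d i + 1 ≤ 2 ^ N * 2 := by
      have h2 : d i ≤ N := le_degf d i
      have h3 : N < 2 ^ N := Nat.lt_two_pow_self
      have : 2 ^ N ≤ 2 ^ N * 2 := Nat.le_mul_of_pos_right _ (by norm_num)
      omega
    exact_mod_cast hle
  have hstep2 : ‖MvPowerSeries.coeff (R := ℂ) (d + Finsupp.single i 1) f‖ * r ^ N ≤ C / r := by
    rw [le_div_iff₀ hr, mul_assoc, ← pow_succ]
    exact h1
  rw [coeff_pder, norm_mul]
  have hnat : ‖((d i + 1 : ℕ) : ℂ)‖ = ((d i + 1 : ℕ) : ℝ) := by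
    rw [Complex.norm_natCast]
  rw [hnat]
  have hrpow : (r / 2) ^ N = r ^ N * (1 / 2 : ℝ) ^ N := by
    rw [← mul_pow]; ring_nf
  calc ((d i + 1 : ℕ) : ℝ) * ‖MvPowerSeries.coeff (R := ℂ) (d + Finsupp.single i 1) f‖ *
        (r / 2) ^ N
      = (((d i + 1 : ℕ) : ℝ) * (1 / 2 : ℝ) ^ N) *
        (‖MvPowerSeries.coeff (R := ℂ) (d + Finsupp.single i 1) f‖ * r ^ N) := by
        rw [hrpow]; ring
    _ ≤ (((2 : ℝ) ^ N * 2) * (1 / 2 : ℝ) ^ N) * (C / r) := by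
        apply mul_le_mul _ hstep2 (by positivity) (by positivity)
        exact mul_le_mul_of_nonneg_right hstep1 (by positivity)
    _ = ((2 : ℝ) ^ N * (1 / 2 : ℝ) ^ N) * (2 * C / r) := by ring
    _ = 2 * C / r := by rw [← mul_pow]; norm_num

lemma degf_fintype {σ : Type*} [Fintype σ] (d : σ →₀ ℕ) : degf d = ∑ i : σ, d i :=
  Finsupp.sum_fintype _ _ (fun _ => rfl)

lemma degf_sumElim {σ τ : Type*} [Fintype σ] [Fintype τ] (a : σ →₀ ℕ) (b : τ →₀ ℕ) :
    degf (Finsupp.sumElim a b) = degf a + degf b := by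
  rw [degf_fintype, degf_fintype, degf_fintype, Fintype.sum_sum_type]
  simp

lemma IsConv_conjS {σ : Type*} {f : MvPowerSeries σ ℂ} (hf : IsConv f) : IsConv (conjS f) := by
  obtain ⟨C, r, hr, hb⟩ := hf
  refine ⟨C, r, hr, fun d => ?_⟩
  rw [conjS, MvPowerSeries.coeff_map]
  have : ‖(starRingEnd ℂ) (MvPowerSeries.coeff (R := ℂ) d f)‖ = ‖MvPowerSeries.coeff (R := ℂ) d f‖ :=
    RCLike.norm_conj _
  rw [this]
  exact hb d

lemma IsConv_thetaCoef (m : ℕ) {Θ : MvPowerSeries (Fin m ⊕ (Fin m ⊕ Unit)) ℂ}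
    (hΘ : IsConv Θ) (β : Fin m →₀ ℕ) : IsConv (thetaCoef m Θ β) := by
  by_cases hβ : β = 0
  · subst hβ
    rw [thetaCoef_zero]
    exact IsConv_X _
  · obtain ⟨C, r, hr, hb⟩ := IsConv_conjS hΘ
    refine ⟨C / r ^ degf β, r, hr, fun d => ?_⟩
    rw [coeff_thetaCoef m Θ hβ]
    rw [le_div_iff₀ (by positivity)]
    calc ‖MvPowerSeries.coeff (R := ℂ) (Finsupp.sumElim β d) (conjS Θ)‖ * r ^ degf d * r ^ degf β
        = ‖MvPowerSeries.coeff (R := ℂ) (Finsupp.sumElim β d) (conjS Θ)‖ *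
          r ^ degf (Finsupp.sumElim β d) := by
          rw [degf_sumElim, pow_add]; ring
      _ ≤ C := hb _

-- ## linear algebra

open scoped Matrix

lemma dir2 (m : ℕ) (Θ' : MvPowerSeries (Fin m ⊕ (Fin m ⊕ Unit)) ℂ) (hΘ' : NormalEnc m Θ')
    (hHN : HoloNondeg m Θ') :
    ¬ ∃ a : (Fin m ⊕ Unit) → MvPowerSeries (Fin m ⊕ Unit) ℂ,
        IsTangentField m Θ' a ∧ ∃ k, a k ≠ 0 := by
  rintro ⟨a, ⟨hconv, q, hq, heq⟩, k0, hk0⟩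
  have hL : ∀ β, LHSf m Θ' a β = 0 :=
    (tangency_iff m Θ' hΘ'.2.1 a).mp ⟨q, hq, heq⟩
  obtain ⟨B, hB0, hdet⟩ := hHN
  set M : Matrix (Fin m ⊕ Unit) (Fin m ⊕ Unit) (MvPowerSeries (Fin m ⊕ Unit) ℂ) :=
    Matrix.of fun i j => pder j (thetaCoef m Θ' (Sum.elim B (fun _ => (0 : Fin m →₀ ℕ)) i))
    with hM
  have hMv : M *ᵥ a = 0 := by
    funext i
    have hLi := hL (Sum.elim B (fun _ => (0 : Fin m →₀ ℕ)) i)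
    rw [LHSf] at hLi
    calc (M *ᵥ a) i = ∑ k, M i k * a k := rfl
      _ = ∑ k, a k * pder k (thetaCoef m Θ' (Sum.elim B (fun _ => (0 : Fin m →₀ ℕ)) i)) := by
          apply Finset.sum_congr rfl
          intro k _
          rw [hM]
          exact mul_comm _ _
      _ = 0 := hLi
  have h2 : M.det • a = 0 := by
    have h3 := congrArg (fun v => (Matrix.adjugate M) *ᵥ v) hMv
    simpa [Matrix.mulVec_mulVec, Matrix.adjugate_mul, Matrix.smul_mulVec,
      Matrix.one_mulVec, Matrix.mulVec_zero] using h3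
  have h4 : M.det * a k0 = 0 := by
    have := congrFun h2 k0
    simpa using this
  rcases mul_eq_zero.mp h4 with h | h
  · exact hdet h
  · exact hk0 h

lemma sign_mul_ne_zero {R : Type*} [CommRing R] {κ : Type*} [Fintype κ] [DecidableEq κ]
    (σ : Equiv.Perm κ) {x : R} (hx : x ≠ 0) : (Equiv.Perm.sign σ : ℤ) * x ≠ 0 := by
  rcases Int.units_eq_one_or (Equiv.Perm.sign σ) with hs | hs <;> rw [hs] <;> simp [hx]

lemma core_det (m : ℕ) (Θ' : MvPowerSeries (Fin m ⊕ (Fin m ⊕ Unit)) ℂ)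
    (hnd : ¬ HoloNondeg m Θ') (ρ : (Fin m ⊕ Unit) → (Fin m →₀ ℕ)) (i0 : Fin m ⊕ Unit)
    (h0 : ρ i0 = 0) (hne : ∀ i, i ≠ i0 → ρ i ≠ 0) :
    Matrix.det (Matrix.of fun i j : Fin m ⊕ Unit => pder j (thetaCoef m Θ' (ρ i))) = 0 := by
  by_contra hdet
  apply hnd
  set σ : Equiv.Perm (Fin m ⊕ Unit) := Equiv.swap i0 (Sum.inr ()) with hσ
  refine ⟨fun j => ρ (σ (Sum.inl j)), fun j => ?_, ?_⟩
  · apply hne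
    intro hc
    have h2 : (Sum.inl j : Fin m ⊕ Unit) = Sum.inr () := by
      have h3 := congrArg σ hc
      rw [hσ, Equiv.swap_apply_self] at h3
      rw [h3]
      exact Equiv.swap_apply_left _ _
    exact nomatch h2
  · have hrow : ∀ i : Fin m ⊕ Unit,
        (Sum.elim (fun j => ρ (σ (Sum.inl j))) (fun _ => (0 : Fin m →₀ ℕ)) i) = ρ (σ i) := by
      rintro (j | u)
      · rfl
      · rw [Sum.elim_inr, hσ, Equiv.swap_apply_right, h0]
    have hsub : (Matrix.of fun i j : Fin m ⊕ Unit =>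
        pder j (thetaCoef m Θ' (Sum.elim (fun j' => ρ (σ (Sum.inl j')))
          (fun _ => (0 : Fin m →₀ ℕ)) i)))
        = (Matrix.of fun i j : Fin m ⊕ Unit => pder j (thetaCoef m Θ' (ρ i))).submatrix σ id := by
      refine Matrix.ext fun i j => ?_
      rw [Matrix.submatrix_apply, Matrix.of_apply, Matrix.of_apply, hrow]
      rfl
    rw [hsub, Matrix.det_permute]
    exact sign_mul_ne_zero σ hdet

lemma alldets (m : ℕ) (Θ' : MvPowerSeries (Fin m ⊕ (Fin m ⊕ Unit)) ℂ)
    (hnd : ¬ HoloNondeg m Θ') (ρ : (Fin m ⊕ Unit) → (Fin m →₀ ℕ)) :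
    Matrix.det (Matrix.of fun i j : Fin m ⊕ Unit => pder j (thetaCoef m Θ' (ρ i))) = 0 := by
  by_cases hinj : Function.Injective ρ
  · by_cases h0 : ∃ i0, ρ i0 = 0
    · obtain ⟨i0, h0⟩ := h0
      exact core_det m Θ' hnd ρ i0 h0 (fun i hi hc => hi (hinj (hc.trans h0.symm)))
    · push_neg at h0
      set M : Matrix (Fin m ⊕ Unit) (Fin m ⊕ Unit) (MvPowerSeries (Fin m ⊕ Unit) ℂ) :=
        Matrix.of fun i j => pder j (thetaCoef m Θ' (ρ i)) with hM
      set b : (Fin m ⊕ Unit) → MvPowerSeries (Fin m ⊕ Unit) ℂ :=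
        fun j => pder j (thetaCoef m Θ' 0) with hb
      have hδ : ∀ i, (M.updateRow i b).det = 0 := by
        intro i
        have hupd : M.updateRow i b = Matrix.of fun i' j =>
            pder j (thetaCoef m Θ' ((Function.update ρ i 0) i')) := by
          refine Matrix.ext fun i' j => ?_
          by_cases hii : i' = i
          · subst hii
            rw [Matrix.updateRow_self, Matrix.of_apply, Function.update_self]
          · rw [Matrix.updateRow_ne hii, hM, Matrix.of_apply, Matrix.of_apply,
              Function.update_of_ne hii]
        rw [hupd]
        exact core_det m Θ' hnd _ i (Function.update_self _ _ _)
          (fun i' hi' => by rw [Function.update_of_ne hi']; exact h0 i')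
      have hcz : Matrix.cramer M.transpose b = 0 := by
        funext i
        rw [Matrix.cramer_transpose_apply]
        exact hδ i
      have hcr := Matrix.mulVec_cramer M.transpose b
      rw [hcz, Matrix.mulVec_zero] at hcr
      have hb1 : b (Sum.inr ()) = 1 := by
        rw [hb]
        simp only
        rw [thetaCoef_zero, pder_X, if_pos rfl]
      have h5 := congrFun hcr.symm (Sum.inr ())
      rw [Pi.smul_apply, hb1, smul_eq_mul, mul_one, Pi.zero_apply] at h5
      rw [← Matrix.det_transpose M]
      exact h5
  · obtain ⟨i, i', hii, hne⟩ := Function.not_injective_iff.mp hinj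
    apply Matrix.det_zero_of_row_eq hne
    funext j
    rw [Matrix.of_apply, Matrix.of_apply, hii]


lemma alldets_cols (m : ℕ) (Θ' : MvPowerSeries (Fin m ⊕ (Fin m ⊕ Unit)) ℂ)
    (hnd : ¬ HoloNondeg m Θ') (ρ : (Fin m ⊕ Unit) → (Fin m →₀ ℕ))
    (c : (Fin m ⊕ Unit) → (Fin m ⊕ Unit)) :
    Matrix.det (Matrix.of fun i j : Fin m ⊕ Unit => pder (c j) (thetaCoef m Θ' (ρ i))) = 0 := by
  by_cases hc : Function.Injective c
  · have hbij : Function.Bijective c := hc.bijective_of_finite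
    set e : Equiv.Perm (Fin m ⊕ Unit) := Equiv.ofBijective c hbij with he
    have hsub : (Matrix.of fun i j : Fin m ⊕ Unit => pder (c j) (thetaCoef m Θ' (ρ i)))
        = (Matrix.of fun i j : Fin m ⊕ Unit => pder j (thetaCoef m Θ' (ρ i))).submatrix id e := by
      refine Matrix.ext fun i j => ?_
      rfl
    rw [hsub, Matrix.det_permute', alldets m Θ' hnd ρ, mul_zero]
  · obtain ⟨j, j', hjj, hne⟩ := Function.not_injective_iff.mp hc
    apply Matrix.det_zero_of_column_eq hne
    intro i
    rw [Matrix.of_apply, Matrix.of_apply, hjj]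

lemma alldets_fin (m : ℕ) (Θ' : MvPowerSeries (Fin m ⊕ (Fin m ⊕ Unit)) ℂ)
    (hnd : ¬ HoloNondeg m Θ') (ρ : Fin (m + 1) → (Fin m →₀ ℕ))
    (c : Fin (m + 1) → (Fin m ⊕ Unit)) :
    Matrix.det (Matrix.of fun i j : Fin (m + 1) => pder (c j) (thetaCoef m Θ' (ρ i))) = 0 := by
  set ec : (Fin m ⊕ Unit) ≃ Fin (m + 1) :=
    (Equiv.sumCongr (Equiv.refl (Fin m)) (Equiv.ofUnique Unit (Fin 1))).trans
      finSumFinEquiv with hec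
  have hsub : (Matrix.of fun i j : Fin (m + 1) => pder (c j) (thetaCoef m Θ' (ρ i)))
      = (Matrix.of fun i j : Fin m ⊕ Unit =>
          pder (c (ec j)) (thetaCoef m Θ' (ρ (ec i)))).submatrix ec.symm ec.symm := by
    refine Matrix.ext fun i j => ?_
    rw [Matrix.submatrix_apply, Matrix.of_apply, Matrix.of_apply,
      Equiv.apply_symm_apply, Equiv.apply_symm_apply]
  rw [hsub, Matrix.det_submatrix_equiv_self]
  exact alldets_cols m Θ' hnd (fun i => ρ (ec i)) (fun j => c (ec j))

-- ## direction 1: construction of a tangent field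

lemma dir1 (m : ℕ) (Θ' : MvPowerSeries (Fin m ⊕ (Fin m ⊕ Unit)) ℂ) (hΘ' : NormalEnc m Θ')
    (hnd : ¬ HoloNondeg m Θ') :
    ∃ a : (Fin m ⊕ Unit) → MvPowerSeries (Fin m ⊕ Unit) ℂ,
        IsTangentField m Θ' a ∧ ∃ k, a k ≠ 0 := by
  classical
  set P : ℕ → Prop := fun s => ∃ (ρ : Fin s → (Fin m →₀ ℕ)) (c : Fin s → Fin m ⊕ Unit),
    Matrix.det (Matrix.of fun i j : Fin s => pder (c j) (thetaCoef m Θ' (ρ i))) ≠ 0 with hP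
  have hP0 : P 0 := ⟨fun _ => 0, fun _ => Sum.inr (), by
    rw [Matrix.det_isEmpty]; exact one_ne_zero⟩
  have hPn : ¬ P (m + 1) := by
    rintro ⟨ρ, c, h⟩
    exact h (alldets_fin m Θ' hnd ρ c)
  have hex : ∃ s, ¬ P s := ⟨m + 1, hPn⟩
  have hn0 : ¬ P (Nat.find hex) := Nat.find_spec hex
  have hn0le : Nat.find hex ≤ m + 1 := Nat.find_le hPn
  have hn0pos : Nat.find hex ≠ 0 := by
    intro hc
    rw [hc] at hn0
    exact hn0 hP0
  obtain ⟨r, hr⟩ : ∃ r, Nat.find hex = r + 1 := ⟨Nat.find hex - 1, by omega⟩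
  have hPr : P r := by
    by_contra h
    have := Nat.find_min hex (show r < Nat.find hex by omega)
    exact this h
  have hPr1 : ¬ P (r + 1) := hr ▸ hn0
  obtain ⟨ρ, c, hdet⟩ := hPr
  have hrm : r ≤ m := by omega
  have hcinj : Function.Injective c := by
    intro j j' hjj
    by_contra hne
    exact hdet (Matrix.det_zero_of_column_eq hne
      (fun i => by rw [Matrix.of_apply, Matrix.of_apply, hjj]))
  obtain ⟨c0, hc0⟩ : ∃ c0 : Fin m ⊕ Unit, ∀ j, c j ≠ c0 := by
    by_contra h
    push_neg at h
    have hsurj : Function.Surjective c := fun k => h k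
    have hcard := Fintype.card_le_of_surjective c hsurj
    rw [Fintype.card_sum, Fintype.card_fin, Fintype.card_fin] at hcard
    simp only [Fintype.card_unit] at hcard
    omega
  set cc : Fin (r + 1) → Fin m ⊕ Unit := Fin.snoc c c0 with hcc
  have hccinj : Function.Injective cc := by
    intro j j' h
    rcases Fin.eq_castSucc_or_eq_last j with ⟨j1, rfl⟩ | rfl <;>
      rcases Fin.eq_castSucc_or_eq_last j' with ⟨j2, rfl⟩ | rfl
    · rw [hcc, Fin.snoc_castSucc, Fin.snoc_castSucc] at h
      rw [hcinj h]
    · rw [hcc, Fin.snoc_castSucc, Fin.snoc_last] at h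
      exact absurd h (hc0 j1)
    · rw [hcc, Fin.snoc_last, Fin.snoc_castSucc] at h
      exact absurd h.symm (hc0 j2)
    · rfl
  set N : Matrix (Fin (r + 1)) (Fin (r + 1)) (MvPowerSeries (Fin m ⊕ Unit) ℂ) :=
    Matrix.of (Fin.snoc (fun i j => pder (cc j) (thetaCoef m Θ' (ρ i)))
      (Pi.single (Fin.last r) 1)) with hN
  have hNlast : ∀ j, N (Fin.last r) j
      = (Pi.single (Fin.last r) 1 : Fin (r + 1) → MvPowerSeries (Fin m ⊕ Unit) ℂ) j := by
    intro j
    rw [hN, Matrix.of_apply, Fin.snoc_last]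
  have hNcast : ∀ (i : Fin r) j, N (Fin.castSucc i) j = pder (cc j) (thetaCoef m Θ' (ρ i)) := by
    intro i j
    rw [hN, Matrix.of_apply, Fin.snoc_castSucc]
  set a' : Fin (r + 1) → MvPowerSeries (Fin m ⊕ Unit) ℂ :=
    fun i => N.adjugate i (Fin.last r) with ha'
  have key_eq : ∀ β : Fin m →₀ ℕ,
      (∑ i : Fin (r + 1), pder (cc i) (thetaCoef m Θ' β) * a' i) = 0 := by
    intro β
    set Mβ := N.updateRow (Fin.last r) (fun j => pder (cc j) (thetaCoef m Θ' β)) with hMβ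
    have hMβrows : Mβ = Matrix.of fun i j =>
        pder (cc j) (thetaCoef m Θ' ((Fin.snoc ρ β : Fin (r + 1) → (Fin m →₀ ℕ)) i)) := by
      refine Matrix.ext fun i j => ?_
      refine Fin.lastCases ?_ ?_ i
      · rw [hMβ, Matrix.updateRow_self, Matrix.of_apply, Fin.snoc_last]
      · intro i'
        rw [hMβ, Matrix.updateRow_ne (Fin.castSucc_lt_last i').ne, hNcast,
          Matrix.of_apply, Fin.snoc_castSucc]
    have hdet0 : Mβ.det = 0 := by
      by_contra h
      exact hPr1 ⟨Fin.snoc ρ β, cc, hMβrows ▸ h⟩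
    have hadj : ∀ i, Mβ.adjugate i (Fin.last r) = a' i := by
      intro i
      simp only [ha']
      rw [Matrix.adjugate_apply, Matrix.adjugate_apply]
      congr 1
      refine Matrix.ext fun i' j => ?_
      by_cases hii : i' = Fin.last r
      · subst hii
        rw [Matrix.updateRow_self, Matrix.updateRow_self]
      · rw [Matrix.updateRow_ne hii, Matrix.updateRow_ne hii, hMβ,
          Matrix.updateRow_ne hii]
    calc (∑ i : Fin (r + 1), pder (cc i) (thetaCoef m Θ' β) * a' i)
        = ∑ i : Fin (r + 1), Mβ (Fin.last r) i * Mβ.adjugate i (Fin.last r) := by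
          apply Finset.sum_congr rfl
          intro i _
          rw [hadj, hMβ, Matrix.updateRow_self]
      _ = (Mβ * Mβ.adjugate) (Fin.last r) (Fin.last r) := (Matrix.mul_apply).symm
      _ = (Mβ.det • (1 : Matrix (Fin (r + 1)) (Fin (r + 1)) _)) (Fin.last r) (Fin.last r) := by
          rw [Matrix.mul_adjugate]
      _ = Mβ.det := by rw [Matrix.smul_apply, Matrix.one_apply_eq, smul_eq_mul, mul_one]
      _ = 0 := hdet0
  set afun : (Fin m ⊕ Unit) → MvPowerSeries (Fin m ⊕ Unit) ℂ :=
    fun k => ∑ i : Fin (r + 1), if cc i = k then a' i else 0 with hafun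
  have hafun_cc : ∀ i, afun (cc i) = a' i := by
    intro i
    simp only [hafun]
    rw [Finset.sum_eq_single i]
    · rw [if_pos rfl]
    · intro j _ hji
      rw [if_neg (fun hc => hji (hccinj hc))]
    · intro h
      exact absurd (Finset.mem_univ i) h
  have hLHS : ∀ β : Fin m →₀ ℕ, LHSf m Θ' afun β = 0 := by
    intro β
    rw [LHSf]
    calc (∑ k : Fin m ⊕ Unit, afun k * pder k (thetaCoef m Θ' β))
        = ∑ k : Fin m ⊕ Unit, ∑ i : Fin (r + 1),
            (if cc i = k then a' i else 0) * pder k (thetaCoef m Θ' β) := by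
          apply Finset.sum_congr rfl
          intro k _
          simp only [hafun]
          rw [Finset.sum_mul]
      _ = ∑ i : Fin (r + 1), ∑ k : Fin m ⊕ Unit,
            (if cc i = k then a' i else 0) * pder k (thetaCoef m Θ' β) := Finset.sum_comm
      _ = ∑ i : Fin (r + 1), a' i * pder (cc i) (thetaCoef m Θ' β) := by
          apply Finset.sum_congr rfl
          intro i _
          rw [Finset.sum_eq_single (cc i)]
          · rw [if_pos rfl]
          · intro k _ hk
            rw [if_neg (fun hc => hk hc.symm), zero_mul]
          · intro h
            exact absurd (Finset.mem_univ _) h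
      _ = ∑ i : Fin (r + 1), pder (cc i) (thetaCoef m Θ' β) * a' i := by
          apply Finset.sum_congr rfl
          intro i _
          exact mul_comm _ _
      _ = 0 := key_eq β
  have hne : afun (cc (Fin.last r)) ≠ 0 := by
    rw [hafun_cc]
    simp only [ha']
    have h1 : N.adjugate (Fin.last r) (Fin.last r) = N.det := by
      rw [Matrix.adjugate_apply]
      have h2 : (Pi.single (Fin.last r) 1 : Fin (r + 1) → MvPowerSeries (Fin m ⊕ Unit) ℂ)
          = N (Fin.last r) := by
        funext j
        rw [hNlast]
      rw [h2, Matrix.updateRow_eq_self]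
    rw [h1]
    have h3 : N.det = Matrix.det (Matrix.of fun i j : Fin r =>
        pder (c j) (thetaCoef m Θ' (ρ i))) := by
      rw [Matrix.det_succ_row N (Fin.last r)]
      rw [Finset.sum_eq_single (Fin.last r)]
      · rw [hNlast, Pi.single_eq_same]
        have hsign : ((-1 : MvPowerSeries (Fin m ⊕ Unit) ℂ)) ^
            ((Fin.last r : ℕ) + (Fin.last r : ℕ)) = 1 := by
          apply Even.neg_one_pow
          exact ⟨(Fin.last r : ℕ), rfl⟩
        rw [hsign, one_mul, one_mul]
        congr 1
        refine Matrix.ext fun i j => ?_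
        rw [Matrix.submatrix_apply, Fin.succAbove_last, hNcast, Matrix.of_apply, hcc,
          Fin.snoc_castSucc]
      · intro j _ hj
        rw [hNlast, Pi.single_eq_of_ne hj, mul_zero, zero_mul]
      · intro h
        exact absurd (Finset.mem_univ _) h
    rw [h3]
    exact hdet
  have hNconv : ∀ i j, IsConv (N i j) := by
    intro i j
    refine Fin.lastCases ?_ ?_ i
    · rw [hNlast]
      by_cases hj : j = Fin.last r
      · subst hj; rw [Pi.single_eq_same]; exact IsConv_one
      · rw [Pi.single_eq_of_ne hj]; exact IsConv_zero
    · intro i'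
      rw [hNcast]
      exact IsConv_pder (IsConv_thetaCoef m hΘ'.1 _) _
  have hconv : ∀ k, IsConv (afun k) := by
    intro k
    simp only [hafun]
    apply IsConv_sum
    intro i _
    by_cases h : cc i = k
    · rw [if_pos h]
      simp only [ha']
      rw [Matrix.adjugate_apply]
      apply IsConv_det
      intro i' j
      by_cases hii : i' = Fin.last r
      · subst hii
        rw [Matrix.updateRow_self]
        by_cases hj : j = i
        · subst hj; rw [Pi.single_eq_same]; exact IsConv_one
        · rw [Pi.single_eq_of_ne hj]; exact IsConv_zero
      · rw [Matrix.updateRow_ne hii]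
        exact hNconv i' j
    · rw [if_neg h]
      exact IsConv_zero
  exact ⟨afun, ⟨hconv, (tangency_iff m Θ' hΘ'.2.1 afun).mpr hLHS⟩, cc (Fin.last r), hne⟩

/-- **Lemma 3.3 (Stanton's criterion).** `(M',0)` is holomorphically nondegenerate
at `0` (no nonzero convergent holomorphic vector field tangent to it) if and only if
there are multiindices `β^1,…,β^{n-1} ≠ 0` such that, with `β^n := 0`,
`det(∂Θ'_{β^i}/∂t'_j(w',z'))_{1≤i,j≤n} ≢ 0`. -/
theorem holomorphic_nondegeneracy_characterization
    (m : ℕ) (hm : 1 ≤ m)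
    (Θ' : MvPowerSeries (Fin m ⊕ (Fin m ⊕ Unit)) ℂ) (hΘ' : NormalEnc m Θ') :
    (¬ ∃ a : (Fin m ⊕ Unit) → MvPowerSeries (Fin m ⊕ Unit) ℂ,
        IsTangentField m Θ' a ∧ ∃ k, a k ≠ 0)
      ↔ HoloNondeg m Θ' := by
  constructor
  · intro h
    by_contra hnd
    exact h (dir1 m Θ' hΘ' hnd)
  · intro hHN
    exact dir2 m Θ' hΘ' hHN

end
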